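/- Embedding-projection pairs compose: in CBPV*, (1) if (V₁, S₁) is a value ep pair from A₁ to A₂ and (V₂, S₂) is a value ep pair from A₂ to A₃, then (V₂[V₁], S₁[S₂]) is a value ep pair from A₁ to A₃; and (2) if (V₁, S₁) is a computation ep pair from B₁ to B₂ and (V₂, S₂) is a computation ep pair from B₂ to B₃, then (V₂[V₁], S₁[S₂]) is a computation ep pair from B₁ to B₃. -/

import Mathlib

set_option autoImplicit true
set_option maxHeartbeats 1000000

namespace GTTPaper

/-! ## Syntax of value and computation types.

Value types `A ::= ? | 0 | 1 | A + A | A × A | U B` and computation types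
`B ::= ¿ | ⊤ | B & B | A → B | F A`, together with (co)recursive types
`μX.A`/`νY.B` and type variables, which are used only by the CBPV* fragment. -/

mutual
inductive VTy : Type
| dyn : VTy                      -- the dynamic value type ?
| zero : VTy
| one : VTy
| sum : VTy → VTy → VTy
| prod : VTy → VTy → VTy
| U : CTy → VTy
| tvarV : Nat → VTy              -- value type variable (CBPV* only)
| mu : VTy → VTy                 -- recursive value type (CBPV* only)
inductive CTy : Type
| dync : CTy                     -- the dynamic computation type ¿
| top : CTy
| wth : CTy → CTy → CTy          -- lazy product B & B
| arr : VTy → CTy → CTy          -- A → B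
| F : VTy → CTy
| tvarC : Nat → CTy              -- computation type variable (CBPV* only)
| nu : CTy → CTy                 -- corecursive computation type (CBPV* only)
end

def liftN (f : Nat → Nat) : Nat → Nat
| 0 => 0
| n+1 => f n + 1

mutual
def renVTy (fv fc : Nat → Nat) : VTy → VTy
| .dyn => .dyn
| .zero => .zero
| .one => .one
| .sum A A' => .sum (renVTy fv fc A) (renVTy fv fc A')
| .prod A A' => .prod (renVTy fv fc A) (renVTy fv fc A')
| .U B => .U (renCTy fv fc B)
| .tvarV n => .tvarV (fv n)
| .mu A => .mu (renVTy (liftN fv) fc A)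
def renCTy (fv fc : Nat → Nat) : CTy → CTy
| .dync => .dync
| .top => .top
| .wth B B' => .wth (renCTy fv fc B) (renCTy fv fc B')
| .arr A B => .arr (renVTy fv fc A) (renCTy fv fc B)
| .F A => .F (renVTy fv fc A)
| .tvarC n => .tvarC (fc n)
| .nu B => .nu (renCTy fv (liftN fc) B)
end

def liftSubVV (σv : Nat → VTy) : Nat → VTy
| 0 => .tvarV 0
| n+1 => renVTy Nat.succ id (σv n)
def liftSubVC (σc : Nat → CTy) : Nat → CTy := fun n => renCTy Nat.succ id (σc n)
def liftSubCV (σv : Nat → VTy) : Nat → VTy := fun n => renVTy id Nat.succ (σv n)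
def liftSubCC (σc : Nat → CTy) : Nat → CTy
| 0 => .tvarC 0
| n+1 => renCTy id Nat.succ (σc n)

mutual
def subVTy (σv : Nat → VTy) (σc : Nat → CTy) : VTy → VTy
| .dyn => .dyn
| .zero => .zero
| .one => .one
| .sum A A' => .sum (subVTy σv σc A) (subVTy σv σc A')
| .prod A A' => .prod (subVTy σv σc A) (subVTy σv σc A')
| .U B => .U (subCTy σv σc B)
| .tvarV n => σv n
| .mu A => .mu (subVTy (liftSubVV σv) (liftSubVC σc) A)
def subCTy (σv : Nat → VTy) (σc : Nat → CTy) : CTy → CTy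
| .dync => .dync
| .top => .top
| .wth B B' => .wth (subCTy σv σc B) (subCTy σv σc B')
| .arr A B => .arr (subVTy σv σc A) (subCTy σv σc B)
| .F A => .F (subVTy σv σc A)
| .tvarC n => σc n
| .nu B => .nu (subCTy (liftSubCV σv) (liftSubCC σc) B)
end

/-- The one-step unfolding `A[μX.A/X]` of the recursive type `μX.A`. -/
def muUnfold (A : VTy) : VTy :=
  subVTy (fun n => match n with | 0 => .mu A | n+1 => .tvarV n) (fun n => .tvarC n) A
/-- The one-step unfolding `B[νY.B/Y]` of the corecursive type `νY.B`. -/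
def nuUnfold (B : CTy) : CTy :=
  subCTy (fun n => .tvarV n) (fun n => match n with | 0 => .nu B | n+1 => .tvarC n) B

-- A "basic" (GTT) type: one not mentioning (co)recursive types or type variables.
mutual
def VTy.basic : VTy → Prop
| .dyn => True
| .zero => True
| .one => True
| .sum A A' => A.basic ∧ A'.basic
| .prod A A' => A.basic ∧ A'.basic
| .U B => B.basic
| .tvarV _ => False
| .mu _ => False
def CTy.basic : CTy → Prop
| .dync => True
| .top => True
| .wth B B' => B.basic ∧ B'.basic
| .arr A B => A.basic ∧ B.basic
| .F A => A.basic
| .tvarC _ => False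
| .nu _ => False
end

/-! ## Type dynamism A ⊑ A', B ⊑ B' : the least reflexive transitive congruence
with `A ⊑ ?` and `B ⊑ ¿` for every (GTT) type. -/

mutual
inductive VDyn : VTy → VTy → Prop
| refl (A : VTy) : VDyn A A
| trans : VDyn A A' → VDyn A' A'' → VDyn A A''
| dyn : VTy.basic A → VDyn A .dyn
| sum : VDyn A₁ A₁' → VDyn A₂ A₂' → VDyn (.sum A₁ A₂) (.sum A₁' A₂')
| prod : VDyn A₁ A₁' → VDyn A₂ A₂' → VDyn (.prod A₁ A₂) (.prod A₁' A₂')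
| U : CDyn B B' → VDyn (.U B) (.U B')
inductive CDyn : CTy → CTy → Prop
| refl (B : CTy) : CDyn B B
| trans : CDyn B B' → CDyn B' B'' → CDyn B B''
| dync : CTy.basic B → CDyn B .dync
| wth : CDyn B₁ B₁' → CDyn B₂ B₂' → CDyn (.wth B₁ B₂) (.wth B₁' B₂')
| arr : VDyn A A' → CDyn B B' → CDyn (.arr A B) (.arr A' B')
| F : VDyn A A' → CDyn (.F A) (.F A')
end

/-! ## Term syntax: complex values `V`, and computations/stacks `M`,`S`.

Terms are raw, with de Bruijn indices for value variables and a single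
distinguished stack hole `•`.  The cast terms `⟨A'↢A⟩V` (`up`) and `⟨B↞B'⟩M`
(`dn`) record their types. -/

mutual
inductive Val : Type
| var : Nat → Val
| up : VTy → VTy → Val → Val          -- ⟨A'↢A⟩V  (up A A' V)
| unit : Val                           -- ()
| inl : Val → Val
| inr : Val → Val
| pair : Val → Val → Val
| abortV : Val → Val                   -- abort V (complex value)
| caseV : Val → Val → Val → Val        -- case V of {x₁.W₁ | x₂.W₂} (branches bind 1 var)
| splitPV : Val → Val → Val            -- split V to (x,y).W  (body binds 2 vars: 1 = x, 0 = y)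
| splitUV : Val → Val → Val            -- split V to ().W
| rollV : VTy → Val → Val              -- roll_{μX.A} V
| unrollPV : Val → Val → Val           -- pm V as roll x. W (body binds 1 var)
| thunk : Comp → Val
inductive Comp : Type
| hole : Comp                          -- the stack hole •
| err : Comp                           -- ℧
| dn : CTy → CTy → Comp → Comp         -- ⟨B↞B'⟩M  (dn B B' M)
| force : Val → Comp
| ret : Val → Comp
| bind : Comp → Comp → Comp            -- bind M (x. N)
| lam : Comp → Comp                    -- λx.M
| app : Comp → Val → Comp
| unitC : Comp                         -- {}
| pairC : Comp → Comp → Comp           -- ⟨M₁, M₂⟩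
| fst : Comp → Comp                    -- π
| snd : Comp → Comp                    -- π'
| abortC : Val → Comp                 -- abort V (computation)
| caseC : Val → Comp → Comp → Comp     -- case V of {x₁.M₁ | x₂.M₂}
| splitPC : Val → Comp → Comp
| splitUC : Val → Comp → Comp
| unrollPC : Val → Comp → Comp
| rollC : CTy → Comp → Comp            -- roll_{νY.B} M
| unrollC : Comp → Comp
end

/-! ### Renaming, substitution and plugging of stacks. -/

mutual
def renV (f : Nat → Nat) : Val → Val
| .var n => .var (f n)
| .up A A' V => .up A A' (renV f V)
| .unit => .unit
| .inl V => .inl (renV f V)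
| .inr V => .inr (renV f V)
| .pair V W => .pair (renV f V) (renV f W)
| .abortV V => .abortV (renV f V)
| .caseV V W₁ W₂ => .caseV (renV f V) (renV (liftN f) W₁) (renV (liftN f) W₂)
| .splitPV V W => .splitPV (renV f V) (renV (liftN (liftN f)) W)
| .splitUV V W => .splitUV (renV f V) (renV f W)
| .rollV T V => .rollV T (renV f V)
| .unrollPV V W => .unrollPV (renV f V) (renV (liftN f) W)
| .thunk M => .thunk (renC f M)
def renC (f : Nat → Nat) : Comp → Comp
| .hole => .hole
| .err => .err
| .dn B B' M => .dn B B' (renC f M)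
| .force V => .force (renV f V)
| .ret V => .ret (renV f V)
| .bind M N => .bind (renC f M) (renC (liftN f) N)
| .lam M => .lam (renC (liftN f) M)
| .app M V => .app (renC f M) (renV f V)
| .unitC => .unitC
| .pairC M N => .pairC (renC f M) (renC f N)
| .fst M => .fst (renC f M)
| .snd M => .snd (renC f M)
| .abortC V => .abortC (renV f V)
| .caseC V M₁ M₂ => .caseC (renV f V) (renC (liftN f) M₁) (renC (liftN f) M₂)
| .splitPC V M => .splitPC (renV f V) (renC (liftN (liftN f)) M)
| .splitUC V M => .splitUC (renV f V) (renC f M)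
| .unrollPC V M => .unrollPC (renV f V) (renC (liftN f) M)
| .rollC T M => .rollC T (renC f M)
| .unrollC M => .unrollC (renC f M)
end

def liftSub (σ : Nat → Val) : Nat → Val
| 0 => .var 0
| n+1 => renV Nat.succ (σ n)

mutual
def subV (σ : Nat → Val) : Val → Val
| .var n => σ n
| .up A A' V => .up A A' (subV σ V)
| .unit => .unit
| .inl V => .inl (subV σ V)
| .inr V => .inr (subV σ V)
| .pair V W => .pair (subV σ V) (subV σ W)
| .abortV V => .abortV (subV σ V)
| .caseV V W₁ W₂ => .caseV (subV σ V) (subV (liftSub σ) W₁) (subV (liftSub σ) W₂)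
| .splitPV V W => .splitPV (subV σ V) (subV (liftSub (liftSub σ)) W)
| .splitUV V W => .splitUV (subV σ V) (subV σ W)
| .rollV T V => .rollV T (subV σ V)
| .unrollPV V W => .unrollPV (subV σ V) (subV (liftSub σ) W)
| .thunk M => .thunk (subC σ M)
def subC (σ : Nat → Val) : Comp → Comp
| .hole => .hole
| .err => .err
| .dn B B' M => .dn B B' (subC σ M)
| .force V => .force (subV σ V)
| .ret V => .ret (subV σ V)
| .bind M N => .bind (subC σ M) (subC (liftSub σ) N)
| .lam M => .lam (subC (liftSub σ) M)
| .app M V => .app (subC σ M) (subV σ V)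
| .unitC => .unitC
| .pairC M N => .pairC (subC σ M) (subC σ N)
| .fst M => .fst (subC σ M)
| .snd M => .snd (subC σ M)
| .abortC V => .abortC (subV σ V)
| .caseC V M₁ M₂ => .caseC (subV σ V) (subC (liftSub σ) M₁) (subC (liftSub σ) M₂)
| .splitPC V M => .splitPC (subV σ V) (subC (liftSub (liftSub σ)) M)
| .splitUC V M => .splitUC (subV σ V) (subC σ M)
| .unrollPC V M => .unrollPC (subV σ V) (subC (liftSub σ) M)
| .rollC T M => .rollC T (subC σ M)
| .unrollC M => .unrollC (subC σ M)
end

def sub0 (V : Val) : Nat → Val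
| 0 => V
| n+1 => .var n
/-- Single substitution `W[V/x₀]` in a value. -/
def sub0V (V : Val) (W : Val) : Val := subV (sub0 V) W
/-- Single substitution `M[V/x₀]` in a computation. -/
def sub0C (V : Val) (M : Comp) : Comp := subC (sub0 V) M
def sub2 (V₁ V₂ : Val) : Nat → Val
| 0 => V₂
| 1 => V₁
| n+2 => .var n
/-- Substitution `M[V₁/x₁, V₂/x₀]` for the two variables bound by a pair split. -/
def sub2C (V₁ V₂ : Val) (M : Comp) : Comp := subC (sub2 V₁ V₂) M

mutual
def plugV (M : Comp) (d : Nat) : Val → Val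
| .var n => .var n
| .up A A' V => .up A A' (plugV M d V)
| .unit => .unit
| .inl V => .inl (plugV M d V)
| .inr V => .inr (plugV M d V)
| .pair V W => .pair (plugV M d V) (plugV M d W)
| .abortV V => .abortV (plugV M d V)
| .caseV V W₁ W₂ => .caseV (plugV M d V) (plugV M (d+1) W₁) (plugV M (d+1) W₂)
| .splitPV V W => .splitPV (plugV M d V) (plugV M (d+2) W)
| .splitUV V W => .splitUV (plugV M d V) (plugV M d W)
| .rollV T V => .rollV T (plugV M d V)
| .unrollPV V W => .unrollPV (plugV M d V) (plugV M (d+1) W)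
| .thunk N => .thunk (plugC M d N)
def plugC (M : Comp) (d : Nat) : Comp → Comp
| .hole => renC (· + d) M
| .err => .err
| .dn B B' N => .dn B B' (plugC M d N)
| .force V => .force (plugV M d V)
| .ret V => .ret (plugV M d V)
| .bind N₁ N₂ => .bind (plugC M d N₁) (plugC M (d+1) N₂)
| .lam N => .lam (plugC M (d+1) N)
| .app N V => .app (plugC M d N) (plugV M d V)
| .unitC => .unitC
| .pairC N₁ N₂ => .pairC (plugC M d N₁) (plugC M d N₂)
| .fst N => .fst (plugC M d N)
| .snd N => .snd (plugC M d N)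
| .abortC V => .abortC (plugV M d V)
| .caseC V N₁ N₂ => .caseC (plugV M d V) (plugC M (d+1) N₁) (plugC M (d+1) N₂)
| .splitPC V N => .splitPC (plugV M d V) (plugC M (d+2) N)
| .splitUC V N => .splitUC (plugV M d V) (plugC M d N)
| .unrollPC V N => .unrollPC (plugV M d V) (plugC M (d+1) N)
| .rollC T N => .rollC T (plugC M d N)
| .unrollC N => .unrollC (plugC M d N)
end

/-- `plug S M` plugs the computation `M` into the hole `•` of the stack `S`
(shifting the free variables of `M` past any binders of `S`). -/
def plug (S M : Comp) : Comp := plugC M 0 S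

/-! ## Theories.

A `Policy` determines a particular theory over the shared syntax:
* `up`/`dn` say which primitive casts the theory has
  (GTT: all casts along type dynamism; GTT_G: only ground casts; CBPV*/CBPV: none),
* `recty` says whether (co)recursive types are present (CBPV*/CBPV only),
* `cx` says whether complex values and complex stacks are permitted
  (everywhere except operational CBPV). -/

structure Policy : Type where
  up : VTy → VTy → Prop
  dn : CTy → CTy → Prop
  recty : Prop
  cx : Prop

abbrev Ctx := List VTy

/-- Pointwise type dynamism of contexts, `Φ : Γ ⊑ Γ'`. -/
def CtxDyn : Ctx → Ctx → Prop := List.Forall₂ VDyn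

/-- Dynamism of stoups, `Ψ : Δ ⊑ Δ'`. -/
def StoupDyn : Option CTy → Option CTy → Prop
| none, none => True
| some B, some B' => CDyn B B'
| _, _ => False

/-- Stoup condition for the complex-stack forming rules: the rule forms a
complex stack when the stoup is nonempty, which requires `P.cx`. -/
def StoupOK (P : Policy) : Option CTy → Prop := fun Δ => Δ = none ∨ P.cx

/-! ## Typing: `Γ ⊢ V : A` and `Γ | Δ ⊢ M : B`. -/

mutual
inductive VTyping (P : Policy) : Ctx → Val → VTy → Prop
| var {Γ : Ctx} {n : Nat} {A : VTy} :
    Γ[n]? = some A → VTyping P Γ (.var n) A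
| up : P.up A A' → VTyping P Γ V A → VTyping P Γ (.up A A' V) A'
| unit : VTyping P Γ .unit .one
| inl : VTyping P Γ V A₁ → VTyping P Γ (.inl V) (.sum A₁ A₂)
| inr : VTyping P Γ V A₂ → VTyping P Γ (.inr V) (.sum A₁ A₂)
| pair : VTyping P Γ V₁ A₁ → VTyping P Γ V₂ A₂ → VTyping P Γ (.pair V₁ V₂) (.prod A₁ A₂)
| abortV : P.cx → VTyping P Γ V .zero → VTyping P Γ (.abortV V) A
| caseV : P.cx → VTyping P Γ V (.sum A₁ A₂) → VTyping P (A₁::Γ) W₁ C →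
    VTyping P (A₂::Γ) W₂ C → VTyping P Γ (.caseV V W₁ W₂) C
| splitPV : P.cx → VTyping P Γ V (.prod A₁ A₂) → VTyping P (A₂::A₁::Γ) W C →
    VTyping P Γ (.splitPV V W) C
| splitUV : P.cx → VTyping P Γ V .one → VTyping P Γ W C → VTyping P Γ (.splitUV V W) C
| rollV : P.recty → VTyping P Γ V (muUnfold A) → VTyping P Γ (.rollV (.mu A) V) (.mu A)
| unrollPV : P.cx → P.recty → VTyping P Γ V (.mu A) →
    VTyping P ((muUnfold A)::Γ) W C → VTyping P Γ (.unrollPV V W) C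
| thunk : CTyping P Γ none M B → VTyping P Γ (.thunk M) (.U B)
inductive CTyping (P : Policy) : Ctx → Option CTy → Comp → CTy → Prop
| hole : CTyping P Γ (some B) .hole B
| err : CTyping P Γ none .err B
| dn : P.dn B B' → CTyping P Γ Δ M B' → CTyping P Γ Δ (.dn B B' M) B
| force : VTyping P Γ V (.U B) → CTyping P Γ none (.force V) B
| ret : VTyping P Γ V A → CTyping P Γ none (.ret V) (.F A)
| bind : CTyping P Γ Δ M (.F A) → CTyping P (A::Γ) none N B →
    CTyping P Γ Δ (.bind M N) B
| lam : StoupOK P Δ → CTyping P (A::Γ) Δ M B → CTyping P Γ Δ (.lam M) (.arr A B)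
| app : CTyping P Γ Δ M (.arr A B) → VTyping P Γ V A → CTyping P Γ Δ (.app M V) B
| unitC : StoupOK P Δ → CTyping P Γ Δ .unitC .top
| pairC : StoupOK P Δ → CTyping P Γ Δ M₁ B₁ → CTyping P Γ Δ M₂ B₂ →
    CTyping P Γ Δ (.pairC M₁ M₂) (.wth B₁ B₂)
| fst : CTyping P Γ Δ M (.wth B₁ B₂) → CTyping P Γ Δ (.fst M) B₁
| snd : CTyping P Γ Δ M (.wth B₁ B₂) → CTyping P Γ Δ (.snd M) B₂
| abortC : StoupOK P Δ → VTyping P Γ V .zero → CTyping P Γ Δ (.abortC V) B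
| caseC : StoupOK P Δ → VTyping P Γ V (.sum A₁ A₂) → CTyping P (A₁::Γ) Δ M₁ B →
    CTyping P (A₂::Γ) Δ M₂ B → CTyping P Γ Δ (.caseC V M₁ M₂) B
| splitPC : StoupOK P Δ → VTyping P Γ V (.prod A₁ A₂) → CTyping P (A₂::A₁::Γ) Δ M B →
    CTyping P Γ Δ (.splitPC V M) B
| splitUC : StoupOK P Δ → VTyping P Γ V .one → CTyping P Γ Δ M B →
    CTyping P Γ Δ (.splitUC V M) B
| unrollPC : StoupOK P Δ → P.recty → VTyping P Γ V (.mu A) →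
    CTyping P ((muUnfold A)::Γ) Δ M B → CTyping P Γ Δ (.unrollPC V M) B
| rollC : P.recty → CTyping P Γ Δ M (nuUnfold B) → CTyping P Γ Δ (.rollC (.nu B) M) (.nu B)
| unrollC : P.recty → CTyping P Γ Δ M (.nu B) → CTyping P Γ Δ (.unrollC M) (nuUnfold B)
end

/-! ### Substitutions used to state the η laws. -/

/-- `E[inl x₁/x]` where `x` is variable 0 and `x₁` the freshly bound variable. -/
def etaSumL : Nat → Val
| 0 => .inl (.var 0)
| n+1 => .var (n+2)
def etaSumR : Nat → Val
| 0 => .inr (.var 0)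
| n+1 => .var (n+2)
/-- `E[(x₁,x₂)/x]` in the body of a pair split. -/
def etaProd : Nat → Val
| 0 => .pair (.var 1) (.var 0)
| n+1 => .var (n+3)
/-- `E[()/x]`. -/
def etaOne : Nat → Val
| 0 => .unit
| n+1 => .var (n+1)
/-- `E[roll y/x]`. -/
def etaMu (A : VTy) : Nat → Val
| 0 => .rollV (.mu A) (.var 0)
| n+1 => .var (n+2)

/-! ## Term dynamism.

`VLe P Γ Γ' V V' A A'` is the heterogeneous term dynamism judgement
`Γ ⊑ Γ' ⊢ V ⊑ V' : A ⊑ A'`, and `CLe P Γ Γ' Δ Δ' M M' B B'` is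
`Γ ⊑ Γ' | Δ ⊑ Δ' ⊢ M ⊑ M' : B ⊑ B'`.  It is the least relation closed under
reflexivity, transitivity, substitution and congruence for all term
constructors, together with the βη laws of each connective (in both
directions), the error axioms (℧ is a least element and stacks are strict in
errors), the universal-property axioms for the casts provided by the policy,
and the retract axioms. -/

mutual
inductive VLe (P : Policy) : Ctx → Ctx → Val → Val → VTy → VTy → Prop
-- structural rules
| refl : VTyping P Γ V A → VLe P Γ Γ V V A A
| trans : VLe P Γ Γ' V V' A A' → VLe P Γ' Γ'' V' V'' A' A'' → VLe P Γ Γ'' V V'' A A''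
| var {Γ Γ' : Ctx} {n : Nat} {A A' : VTy} : CtxDyn Γ Γ' →
    Γ[n]? = some A → Γ'[n]? = some A' → VLe P Γ Γ' (.var n) (.var n) A A'
| substVV : VLe P Γ Γ' V V' A A' → VLe P (A::Γ) (A'::Γ') W W' C C' →
    VLe P Γ Γ' (sub0V V W) (sub0V V' W') C C'
-- congruence rules
| inlCong : VLe P Γ Γ' V V' A₁ A₁' → VDyn A₂ A₂' →
    VLe P Γ Γ' (.inl V) (.inl V') (.sum A₁ A₂) (.sum A₁' A₂')
| inrCong : VDyn A₁ A₁' → VLe P Γ Γ' V V' A₂ A₂' →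
    VLe P Γ Γ' (.inr V) (.inr V') (.sum A₁ A₂) (.sum A₁' A₂')
| unitCong : CtxDyn Γ Γ' → VLe P Γ Γ' .unit .unit .one .one
| pairCong : VLe P Γ Γ' V₁ V₁' A₁ A₁' → VLe P Γ Γ' V₂ V₂' A₂ A₂' →
    VLe P Γ Γ' (.pair V₁ V₂) (.pair V₁' V₂') (.prod A₁ A₂) (.prod A₁' A₂')
| thunkCong : CLe P Γ Γ' none none M M' B B' →
    VLe P Γ Γ' (.thunk M) (.thunk M') (.U B) (.U B')
| abortVCong : P.cx → VDyn C C' → VLe P Γ Γ' V V' .zero .zero →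
    VLe P Γ Γ' (.abortV V) (.abortV V') C C'
| caseVCong : P.cx → VLe P Γ Γ' V V' (.sum A₁ A₂) (.sum A₁' A₂') →
    VLe P (A₁::Γ) (A₁'::Γ') W₁ W₁' C C' → VLe P (A₂::Γ) (A₂'::Γ') W₂ W₂' C C' →
    VLe P Γ Γ' (.caseV V W₁ W₂) (.caseV V' W₁' W₂') C C'
| splitPVCong : P.cx → VLe P Γ Γ' V V' (.prod A₁ A₂) (.prod A₁' A₂') →
    VLe P (A₂::A₁::Γ) (A₂'::A₁'::Γ') W W' C C' →
    VLe P Γ Γ' (.splitPV V W) (.splitPV V' W') C C'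
| splitUVCong : P.cx → VLe P Γ Γ' V V' .one .one → VLe P Γ Γ' W W' C C' →
    VLe P Γ Γ' (.splitUV V W) (.splitUV V' W') C C'
| rollVCong : P.recty → VLe P Γ Γ' V V' (muUnfold A) (muUnfold A) →
    VLe P Γ Γ' (.rollV (.mu A) V) (.rollV (.mu A) V') (.mu A) (.mu A)
| unrollPVCong : P.cx → P.recty → VLe P Γ Γ' V V' (.mu A) (.mu A) →
    VLe P ((muUnfold A)::Γ) ((muUnfold A)::Γ') W W' C C' →
    VLe P Γ Γ' (.unrollPV V W) (.unrollPV V' W') C C'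
-- universal property axioms for value upcasts
| upBound : P.up A A' → VLe P [A] [A] (.var 0) (.up A A' (.var 0)) A A'
| upBest : P.up A A' → VLe P [A] [A'] (.up A A' (.var 0)) (.var 0) A' A'
-- βη laws (value versions)
| sumVBetaL : P.cx → VTyping P Γ V A₁ → VTyping P (A₁::Γ) W₁ C → VTyping P (A₂::Γ) W₂ C →
    VLe P Γ Γ (.caseV (.inl V) W₁ W₂) (sub0V V W₁) C C
| sumVBetaL' : P.cx → VTyping P Γ V A₁ → VTyping P (A₁::Γ) W₁ C → VTyping P (A₂::Γ) W₂ C →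
    VLe P Γ Γ (sub0V V W₁) (.caseV (.inl V) W₁ W₂) C C
| sumVBetaR : P.cx → VTyping P Γ V A₂ → VTyping P (A₁::Γ) W₁ C → VTyping P (A₂::Γ) W₂ C →
    VLe P Γ Γ (.caseV (.inr V) W₁ W₂) (sub0V V W₂) C C
| sumVBetaR' : P.cx → VTyping P Γ V A₂ → VTyping P (A₁::Γ) W₁ C → VTyping P (A₂::Γ) W₂ C →
    VLe P Γ Γ (sub0V V W₂) (.caseV (.inr V) W₁ W₂) C C
| sumVEta : P.cx → VTyping P (.sum A₁ A₂ :: Γ) W C →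
    VLe P (.sum A₁ A₂ :: Γ) (.sum A₁ A₂ :: Γ) W
      (.caseV (.var 0) (subV etaSumL W) (subV etaSumR W)) C C
| sumVEta' : P.cx → VTyping P (.sum A₁ A₂ :: Γ) W C →
    VLe P (.sum A₁ A₂ :: Γ) (.sum A₁ A₂ :: Γ)
      (.caseV (.var 0) (subV etaSumL W) (subV etaSumR W)) W C C
| zeroVEta : P.cx → VTyping P (.zero :: Γ) W C →
    VLe P (.zero :: Γ) (.zero :: Γ) W (.abortV (.var 0)) C C
| zeroVEta' : P.cx → VTyping P (.zero :: Γ) W C →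
    VLe P (.zero :: Γ) (.zero :: Γ) (.abortV (.var 0)) W C C
| prodVBeta : P.cx → VTyping P Γ V₁ A₁ → VTyping P Γ V₂ A₂ → VTyping P (A₂::A₁::Γ) W C →
    VLe P Γ Γ (.splitPV (.pair V₁ V₂) W) (subV (sub2 V₁ V₂) W) C C
| prodVBeta' : P.cx → VTyping P Γ V₁ A₁ → VTyping P Γ V₂ A₂ → VTyping P (A₂::A₁::Γ) W C →
    VLe P Γ Γ (subV (sub2 V₁ V₂) W) (.splitPV (.pair V₁ V₂) W) C C
| prodVEta : P.cx → VTyping P (.prod A₁ A₂ :: Γ) W C →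
    VLe P (.prod A₁ A₂ :: Γ) (.prod A₁ A₂ :: Γ) W (.splitPV (.var 0) (subV etaProd W)) C C
| prodVEta' : P.cx → VTyping P (.prod A₁ A₂ :: Γ) W C →
    VLe P (.prod A₁ A₂ :: Γ) (.prod A₁ A₂ :: Γ) (.splitPV (.var 0) (subV etaProd W)) W C C
| oneVBeta : P.cx → VTyping P Γ W C → VLe P Γ Γ (.splitUV .unit W) W C C
| oneVBeta' : P.cx → VTyping P Γ W C → VLe P Γ Γ W (.splitUV .unit W) C C
| oneVEta : P.cx → VTyping P (.one :: Γ) W C →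
    VLe P (.one :: Γ) (.one :: Γ) W (.splitUV (.var 0) (subV etaOne W)) C C
| oneVEta' : P.cx → VTyping P (.one :: Γ) W C →
    VLe P (.one :: Γ) (.one :: Γ) (.splitUV (.var 0) (subV etaOne W)) W C C
| muVBeta : P.cx → P.recty → VTyping P Γ V (muUnfold A) → VTyping P ((muUnfold A)::Γ) W C →
    VLe P Γ Γ (.unrollPV (.rollV (.mu A) V) W) (sub0V V W) C C
| muVBeta' : P.cx → P.recty → VTyping P Γ V (muUnfold A) → VTyping P ((muUnfold A)::Γ) W C →
    VLe P Γ Γ (sub0V V W) (.unrollPV (.rollV (.mu A) V) W) C C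
| muVEta : P.cx → P.recty → VTyping P (.mu A :: Γ) W C →
    VLe P (.mu A :: Γ) (.mu A :: Γ) W (.unrollPV (.var 0) (subV (etaMu A) W)) C C
| muVEta' : P.cx → P.recty → VTyping P (.mu A :: Γ) W C →
    VLe P (.mu A :: Γ) (.mu A :: Γ) (.unrollPV (.var 0) (subV (etaMu A) W)) W C C
| uEta : VTyping P Γ V (.U B) → VLe P Γ Γ V (.thunk (.force V)) (.U B) (.U B)
| uEta' : VTyping P Γ V (.U B) → VLe P Γ Γ (.thunk (.force V)) V (.U B) (.U B)
inductive CLe (P : Policy) : Ctx → Ctx → Option CTy → Option CTy → Comp → Comp → CTy → CTy → Prop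
-- structural rules
| refl : CTyping P Γ Δ M B → CLe P Γ Γ Δ Δ M M B B
| trans : CLe P Γ Γ' Δ Δ' M M' B B' → CLe P Γ' Γ'' Δ' Δ'' M' M'' B' B'' →
    CLe P Γ Γ'' Δ Δ'' M M'' B B''
| hole : CtxDyn Γ Γ' → CDyn B B' → CLe P Γ Γ' (some B) (some B') .hole .hole B B'
| substVC : VLe P Γ Γ' V V' A A' → CLe P (A::Γ) (A'::Γ') Δ Δ' M M' B B' →
    CLe P Γ Γ' Δ Δ' (sub0C V M) (sub0C V' M') B B'
| plugCong : CLe P Γ Γ' Δ Δ' M M' B₁ B₁' →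
    CLe P Γ Γ' (some B₁) (some B₁') S S' B₂ B₂' →
    CLe P Γ Γ' Δ Δ' (plug S M) (plug S' M') B₂ B₂'
-- error axioms
| errBot : CtxDyn Γ Γ' → CDyn B B' → CTyping P Γ' none M' B' →
    CLe P Γ Γ' none none .err M' B B'
| errStrict : CTyping P Γ (some B) S B' → CLe P Γ Γ none none (plug S .err) .err B' B'
-- congruence rules
| forceCong : VLe P Γ Γ' V V' (.U B) (.U B') → CLe P Γ Γ' none none (.force V) (.force V') B B'
| retCong : VLe P Γ Γ' V V' A A' → CLe P Γ Γ' none none (.ret V) (.ret V') (.F A) (.F A')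
| bindCong : CLe P Γ Γ' Δ Δ' M M' (.F A) (.F A') → CLe P (A::Γ) (A'::Γ') none none N N' B B' →
    CLe P Γ Γ' Δ Δ' (.bind M N) (.bind M' N') B B'
| lamCong : StoupOK P Δ → VDyn A A' → CLe P (A::Γ) (A'::Γ') Δ Δ' M M' B B' →
    CLe P Γ Γ' Δ Δ' (.lam M) (.lam M') (.arr A B) (.arr A' B')
| appCong : CLe P Γ Γ' Δ Δ' M M' (.arr A B) (.arr A' B') → VLe P Γ Γ' V V' A A' →
    CLe P Γ Γ' Δ Δ' (.app M V) (.app M' V') B B'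
| unitCCong : StoupOK P Δ → CtxDyn Γ Γ' → StoupDyn Δ Δ' →
    CLe P Γ Γ' Δ Δ' .unitC .unitC .top .top
| pairCCong : StoupOK P Δ → CLe P Γ Γ' Δ Δ' M₁ M₁' B₁ B₁' → CLe P Γ Γ' Δ Δ' M₂ M₂' B₂ B₂' →
    CLe P Γ Γ' Δ Δ' (.pairC M₁ M₂) (.pairC M₁' M₂') (.wth B₁ B₂) (.wth B₁' B₂')
| fstCong : CLe P Γ Γ' Δ Δ' M M' (.wth B₁ B₂) (.wth B₁' B₂') →
    CLe P Γ Γ' Δ Δ' (.fst M) (.fst M') B₁ B₁'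
| sndCong : CLe P Γ Γ' Δ Δ' M M' (.wth B₁ B₂) (.wth B₁' B₂') →
    CLe P Γ Γ' Δ Δ' (.snd M) (.snd M') B₂ B₂'
| abortCCong : StoupOK P Δ → StoupDyn Δ Δ' → CDyn B B' → VLe P Γ Γ' V V' .zero .zero →
    CLe P Γ Γ' Δ Δ' (.abortC V) (.abortC V') B B'
| caseCCong : StoupOK P Δ → VLe P Γ Γ' V V' (.sum A₁ A₂) (.sum A₁' A₂') →
    CLe P (A₁::Γ) (A₁'::Γ') Δ Δ' M₁ M₁' B B' → CLe P (A₂::Γ) (A₂'::Γ') Δ Δ' M₂ M₂' B B' →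
    CLe P Γ Γ' Δ Δ' (.caseC V M₁ M₂) (.caseC V' M₁' M₂') B B'
| splitPCCong : StoupOK P Δ → VLe P Γ Γ' V V' (.prod A₁ A₂) (.prod A₁' A₂') →
    CLe P (A₂::A₁::Γ) (A₂'::A₁'::Γ') Δ Δ' M M' B B' →
    CLe P Γ Γ' Δ Δ' (.splitPC V M) (.splitPC V' M') B B'
| splitUCCong : StoupOK P Δ → VLe P Γ Γ' V V' .one .one → CLe P Γ Γ' Δ Δ' M M' B B' →
    CLe P Γ Γ' Δ Δ' (.splitUC V M) (.splitUC V' M') B B'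
| unrollPCCong : StoupOK P Δ → P.recty → VLe P Γ Γ' V V' (.mu A) (.mu A) →
    CLe P ((muUnfold A)::Γ) ((muUnfold A)::Γ') Δ Δ' M M' B B' →
    CLe P Γ Γ' Δ Δ' (.unrollPC V M) (.unrollPC V' M') B B'
| rollCCong : P.recty → CLe P Γ Γ' Δ Δ' M M' (nuUnfold B) (nuUnfold B) →
    CLe P Γ Γ' Δ Δ' (.rollC (.nu B) M) (.rollC (.nu B) M') (.nu B) (.nu B)
| unrollCCong : P.recty → CLe P Γ Γ' Δ Δ' M M' (.nu B) (.nu B) →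
    CLe P Γ Γ' Δ Δ' (.unrollC M) (.unrollC M') (nuUnfold B) (nuUnfold B)
-- universal property axioms for stack downcasts
| dnBound : P.dn B B' → CLe P [] [] (some B') (some B') (.dn B B' .hole) .hole B B'
| dnBest : P.dn B B' → CLe P [] [] (some B) (some B') .hole (.dn B B' .hole) B B
-- retract axioms for the casts into the dynamic types
| retractF : P.up A .dyn → P.dn (.F A) (.F .dyn) →
    CLe P [A] [A] none none
      (.dn (.F A) (.F .dyn) (.ret (.up A .dyn (.var 0)))) (.ret (.var 0)) (.F A) (.F A)
| retractU : P.up (.U B) (.U .dync) → P.dn B .dync →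
    CLe P [.U B] [.U B] none none
      (.dn B .dync (.force (.up (.U B) (.U .dync) (.var 0)))) (.force (.var 0)) B B
-- βη laws (computation versions)
| sumCBetaL : StoupOK P Δ → VTyping P Γ V A₁ → CTyping P (A₁::Γ) Δ M₁ B → CTyping P (A₂::Γ) Δ M₂ B →
    CLe P Γ Γ Δ Δ (.caseC (.inl V) M₁ M₂) (sub0C V M₁) B B
| sumCBetaL' : StoupOK P Δ → VTyping P Γ V A₁ → CTyping P (A₁::Γ) Δ M₁ B → CTyping P (A₂::Γ) Δ M₂ B →
    CLe P Γ Γ Δ Δ (sub0C V M₁) (.caseC (.inl V) M₁ M₂) B B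
| sumCBetaR : StoupOK P Δ → VTyping P Γ V A₂ → CTyping P (A₁::Γ) Δ M₁ B → CTyping P (A₂::Γ) Δ M₂ B →
    CLe P Γ Γ Δ Δ (.caseC (.inr V) M₁ M₂) (sub0C V M₂) B B
| sumCBetaR' : StoupOK P Δ → VTyping P Γ V A₂ → CTyping P (A₁::Γ) Δ M₁ B → CTyping P (A₂::Γ) Δ M₂ B →
    CLe P Γ Γ Δ Δ (sub0C V M₂) (.caseC (.inr V) M₁ M₂) B B
| sumCEta : StoupOK P Δ → CTyping P (.sum A₁ A₂ :: Γ) Δ M B →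
    CLe P (.sum A₁ A₂ :: Γ) (.sum A₁ A₂ :: Γ) Δ Δ M
      (.caseC (.var 0) (subC etaSumL M) (subC etaSumR M)) B B
| sumCEta' : StoupOK P Δ → CTyping P (.sum A₁ A₂ :: Γ) Δ M B →
    CLe P (.sum A₁ A₂ :: Γ) (.sum A₁ A₂ :: Γ) Δ Δ
      (.caseC (.var 0) (subC etaSumL M) (subC etaSumR M)) M B B
| zeroCEta : StoupOK P Δ → CTyping P (.zero :: Γ) Δ M B →
    CLe P (.zero :: Γ) (.zero :: Γ) Δ Δ M (.abortC (.var 0)) B B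
| zeroCEta' : StoupOK P Δ → CTyping P (.zero :: Γ) Δ M B →
    CLe P (.zero :: Γ) (.zero :: Γ) Δ Δ (.abortC (.var 0)) M B B
| prodCBeta : StoupOK P Δ → VTyping P Γ V₁ A₁ → VTyping P Γ V₂ A₂ → CTyping P (A₂::A₁::Γ) Δ M B →
    CLe P Γ Γ Δ Δ (.splitPC (.pair V₁ V₂) M) (sub2C V₁ V₂ M) B B
| prodCBeta' : StoupOK P Δ → VTyping P Γ V₁ A₁ → VTyping P Γ V₂ A₂ → CTyping P (A₂::A₁::Γ) Δ M B →
    CLe P Γ Γ Δ Δ (sub2C V₁ V₂ M) (.splitPC (.pair V₁ V₂) M) B B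
| prodCEta : StoupOK P Δ → CTyping P (.prod A₁ A₂ :: Γ) Δ M B →
    CLe P (.prod A₁ A₂ :: Γ) (.prod A₁ A₂ :: Γ) Δ Δ M (.splitPC (.var 0) (subC etaProd M)) B B
| prodCEta' : StoupOK P Δ → CTyping P (.prod A₁ A₂ :: Γ) Δ M B →
    CLe P (.prod A₁ A₂ :: Γ) (.prod A₁ A₂ :: Γ) Δ Δ (.splitPC (.var 0) (subC etaProd M)) M B B
| oneCBeta : StoupOK P Δ → CTyping P Γ Δ M B → CLe P Γ Γ Δ Δ (.splitUC .unit M) M B B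
| oneCBeta' : StoupOK P Δ → CTyping P Γ Δ M B → CLe P Γ Γ Δ Δ M (.splitUC .unit M) B B
| oneCEta : StoupOK P Δ → CTyping P (.one :: Γ) Δ M B →
    CLe P (.one :: Γ) (.one :: Γ) Δ Δ M (.splitUC (.var 0) (subC etaOne M)) B B
| oneCEta' : StoupOK P Δ → CTyping P (.one :: Γ) Δ M B →
    CLe P (.one :: Γ) (.one :: Γ) Δ Δ (.splitUC (.var 0) (subC etaOne M)) M B B
| muCBeta : StoupOK P Δ → P.recty → VTyping P Γ V (muUnfold A) → CTyping P ((muUnfold A)::Γ) Δ M B →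
    CLe P Γ Γ Δ Δ (.unrollPC (.rollV (.mu A) V) M) (sub0C V M) B B
| muCBeta' : StoupOK P Δ → P.recty → VTyping P Γ V (muUnfold A) → CTyping P ((muUnfold A)::Γ) Δ M B →
    CLe P Γ Γ Δ Δ (sub0C V M) (.unrollPC (.rollV (.mu A) V) M) B B
| muCEta : StoupOK P Δ → P.recty → CTyping P (.mu A :: Γ) Δ M B →
    CLe P (.mu A :: Γ) (.mu A :: Γ) Δ Δ M (.unrollPC (.var 0) (subC (etaMu A) M)) B B
| muCEta' : StoupOK P Δ → P.recty → CTyping P (.mu A :: Γ) Δ M B →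
    CLe P (.mu A :: Γ) (.mu A :: Γ) Δ Δ (.unrollPC (.var 0) (subC (etaMu A) M)) M B B
| uBeta : CTyping P Γ none M B → CLe P Γ Γ none none (.force (.thunk M)) M B B
| uBeta' : CTyping P Γ none M B → CLe P Γ Γ none none M (.force (.thunk M)) B B
| fBeta : VTyping P Γ V A → CTyping P (A::Γ) none N B →
    CLe P Γ Γ none none (.bind (.ret V) N) (sub0C V N) B B
| fBeta' : VTyping P Γ V A → CTyping P (A::Γ) none N B →
    CLe P Γ Γ none none (sub0C V N) (.bind (.ret V) N) B B
| fEta : CTyping P Γ (some (.F A)) M B →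
    CLe P Γ Γ (some (.F A)) (some (.F A)) M
      (.bind .hole (plug (renC Nat.succ M) (.ret (.var 0)))) B B
| fEta' : CTyping P Γ (some (.F A)) M B →
    CLe P Γ Γ (some (.F A)) (some (.F A))
      (.bind .hole (plug (renC Nat.succ M) (.ret (.var 0)))) M B B
| arrBeta : StoupOK P Δ → CTyping P (A::Γ) Δ M B → VTyping P Γ V A →
    CLe P Γ Γ Δ Δ (.app (.lam M) V) (sub0C V M) B B
| arrBeta' : StoupOK P Δ → CTyping P (A::Γ) Δ M B → VTyping P Γ V A →
    CLe P Γ Γ Δ Δ (sub0C V M) (.app (.lam M) V) B B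
| arrEta : StoupOK P Δ → CTyping P Γ Δ M (.arr A B) →
    CLe P Γ Γ Δ Δ M (.lam (.app (renC Nat.succ M) (.var 0))) (.arr A B) (.arr A B)
| arrEta' : StoupOK P Δ → CTyping P Γ Δ M (.arr A B) →
    CLe P Γ Γ Δ Δ (.lam (.app (renC Nat.succ M) (.var 0))) M (.arr A B) (.arr A B)
| wthBeta1 : StoupOK P Δ → CTyping P Γ Δ M₁ B₁ → CTyping P Γ Δ M₂ B₂ →
    CLe P Γ Γ Δ Δ (.fst (.pairC M₁ M₂)) M₁ B₁ B₁
| wthBeta1' : StoupOK P Δ → CTyping P Γ Δ M₁ B₁ → CTyping P Γ Δ M₂ B₂ →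
    CLe P Γ Γ Δ Δ M₁ (.fst (.pairC M₁ M₂)) B₁ B₁
| wthBeta2 : StoupOK P Δ → CTyping P Γ Δ M₁ B₁ → CTyping P Γ Δ M₂ B₂ →
    CLe P Γ Γ Δ Δ (.snd (.pairC M₁ M₂)) M₂ B₂ B₂
| wthBeta2' : StoupOK P Δ → CTyping P Γ Δ M₁ B₁ → CTyping P Γ Δ M₂ B₂ →
    CLe P Γ Γ Δ Δ M₂ (.snd (.pairC M₁ M₂)) B₂ B₂
| wthEta : StoupOK P Δ → CTyping P Γ Δ M (.wth B₁ B₂) →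
    CLe P Γ Γ Δ Δ M (.pairC (.fst M) (.snd M)) (.wth B₁ B₂) (.wth B₁ B₂)
| wthEta' : StoupOK P Δ → CTyping P Γ Δ M (.wth B₁ B₂) →
    CLe P Γ Γ Δ Δ (.pairC (.fst M) (.snd M)) M (.wth B₁ B₂) (.wth B₁ B₂)
| topEta : StoupOK P Δ → CTyping P Γ Δ M .top → CLe P Γ Γ Δ Δ M .unitC .top .top
| topEta' : StoupOK P Δ → CTyping P Γ Δ M .top → CLe P Γ Γ Δ Δ .unitC M .top .top
| nuBeta : P.recty → CTyping P Γ Δ M (nuUnfold B) →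
    CLe P Γ Γ Δ Δ (.unrollC (.rollC (.nu B) M)) M (nuUnfold B) (nuUnfold B)
| nuBeta' : P.recty → CTyping P Γ Δ M (nuUnfold B) →
    CLe P Γ Γ Δ Δ M (.unrollC (.rollC (.nu B) M)) (nuUnfold B) (nuUnfold B)
| nuEta : P.recty → CTyping P Γ Δ M (.nu B) →
    CLe P Γ Γ Δ Δ M (.rollC (.nu B) (.unrollC M)) (.nu B) (.nu B)
| nuEta' : P.recty → CTyping P Γ Δ M (.nu B) →
    CLe P Γ Γ Δ Δ (.rollC (.nu B) (.unrollC M)) M (.nu B) (.nu B)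
end

/-! ## Equi-dynamism and the particular theories. -/

/-- Homogeneous equi-dynamism of values, `Γ ⊢ V ⋈ V' : A`. -/
def VEquiv (P : Policy) (Γ : Ctx) (V V' : Val) (A : VTy) : Prop :=
  VLe P Γ Γ V V' A A ∧ VLe P Γ Γ V' V A A

/-- Homogeneous equi-dynamism of computations/stacks, `Γ | Δ ⊢ M ⋈ M' : B`. -/
def CEquiv (P : Policy) (Γ : Ctx) (Δ : Option CTy) (M M' : Comp) (B : CTy) : Prop :=
  CLe P Γ Γ Δ Δ M M' B B ∧ CLe P Γ Γ Δ Δ M' M B B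

/-- The theory GTT: primitive casts for every type dynamism, complex values and
stacks, no (co)recursive types. -/
def gttP : Policy :=
  { up := VDyn, dn := CDyn, recty := False, cx := True }

/-- Ground value types `G ::= 1 | ? × ? | 0 | ? + ? | U ¿`. -/
def isGroundV (A : VTy) : Prop :=
  A = .one ∨ A = .prod .dyn .dyn ∨ A = .zero ∨ A = .sum .dyn .dyn ∨ A = .U .dync

/-- Ground computation types `Ḡ ::= ? → ¿ | ⊤ | ¿ & ¿ | F ?`. -/
def isGroundC (B : CTy) : Prop :=
  B = .arr .dyn .dync ∨ B = .top ∨ B = .wth .dync .dync ∨ B = .F .dyn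

/-- The theory GTT_G: its only primitive casts are the upcasts `⟨?↢G⟩`,
the downcasts `⟨FG↞F?⟩`, the downcasts `⟨Ḡ↞¿⟩`, and the upcasts `⟨U¿↢UḠ⟩`
for ground types `G`, `Ḡ`. -/
def gttGP : Policy :=
  { up := fun A A' => (isGroundV A ∧ A' = .dyn) ∨
            (∃ B, isGroundC B ∧ A = .U B ∧ A' = .U .dync),
    dn := fun B B' => (isGroundC B ∧ B' = .dync) ∨
            (∃ A, isGroundV A ∧ B = .F A ∧ B' = .F .dyn),
    recty := False, cx := True }

/-- The theory CBPV*: call-by-push-value with complex values and complex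
stacks, (co)recursive types and error, and no casts. -/
def cbpvStarP : Policy :=
  { up := fun _ _ => False, dn := fun _ _ => False, recty := True, cx := True }

/-- Operational CBPV: as CBPV* but without complex values and complex stacks. -/
def cbpvP : Policy :=
  { up := fun _ _ => False, dn := fun _ _ => False, recty := True, cx := False }

/-! ## Universal properties of casts. -/

/-- `V` (with one free variable `x : A`) satisfies the universal property of an
upcast for `A ⊑ A'`:  `x : A ⊢ x ⊑ V : A ⊑ A'` and
`x ⊑ x' : A ⊑ A' ⊢ V ⊑ x' : A'`. -/
def UpcastUP (P : Policy) (A A' : VTy) (V : Val) : Prop :=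
  VTyping P [A] V A' ∧
  VLe P [A] [A] (.var 0) V A A' ∧
  VLe P [A] [A'] V (.var 0) A' A'

/-- `S` (a stack with hole `• : B'`) satisfies the universal property of a
downcast for `B ⊑ B'`:  `• : B' ⊢ S ⊑ • : B ⊑ B'` and
`• ⊑ •' : B ⊑ B' ⊢ • ⊑ S : B`. -/
def DowncastUP (P : Policy) (B B' : CTy) (S : Comp) : Prop :=
  CTyping P [] (some B') S B ∧
  CLe P [] [] (some B') (some B') S .hole B B' ∧
  CLe P [] [] (some B) (some B') .hole S B B

/-- A stack upcast for `B ⊑ B'`: a stack `• : B ⊢ S : B'` with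
`• : B ⊢ • ⊑ S : B ⊑ B'` and `• ⊑ •' : B ⊑ B' ⊢ S ⊑ •' : B'`. -/
def StackUpcast (P : Policy) (B B' : CTy) (S : Comp) : Prop :=
  CTyping P [] (some B) S B' ∧
  CLe P [] [] (some B) (some B) .hole S B B' ∧
  CLe P [] [] (some B) (some B') S .hole B' B'

/-- A value downcast for `A ⊑ A'`: a complex value `x : A' ⊢ V : A` with
`x : A' ⊢ V ⊑ x : A ⊑ A'` and `x ⊑ x' : A ⊑ A' ⊢ x ⊑ V[x'/x] : A`. -/
def ValueDowncast (P : Policy) (A A' : VTy) (V : Val) : Prop :=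
  VTyping P [A'] V A ∧
  VLe P [A'] [A'] V (.var 0) A A' ∧
  VLe P [A] [A'] (.var 0) V A A

/-! ## Dynamic-type-free types (the image of CBPV* inside GTT). -/

mutual
def VTy.noDyn : VTy → Prop
| .dyn => False
| .zero => True
| .one => True
| .sum A A' => A.noDyn ∧ A'.noDyn
| .prod A A' => A.noDyn ∧ A'.noDyn
| .U B => B.noDyn
| .tvarV _ => True
| .mu A => A.noDyn
def CTy.noDyn : CTy → Prop
| .dync => False
| .top => True
| .wth B B' => B.noDyn ∧ B'.noDyn
| .arr A B => A.noDyn ∧ B.noDyn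
| .F A => A.noDyn
| .tvarC _ => True
| .nu B => B.noDyn
end

def stoupNoDyn : Option CTy → Prop
| none => True
| some B => B.noDyn

/-! ## Embedding-projection pairs in CBPV*. -/

/-- A value ep pair from `A` to `A'` in CBPV*: an embedding value
`x:A ⊢ Ve : A'` and a projection stack `•:FA' ⊢ Sp : FA` satisfying
retraction `x:A ⊢ ret x ⋈ Sp[ret Ve] : FA` and projection
`•:FA' ⊢ bind(Sp, x. ret Ve) ⊑ • : FA'`. -/
def ValEP (A A' : VTy) (Ve : Val) (Sp : Comp) : Prop :=
  VTyping cbpvStarP [A] Ve A' ∧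
  CTyping cbpvStarP [] (some (.F A')) Sp (.F A) ∧
  CEquiv cbpvStarP [A] none (.ret (.var 0)) (plug Sp (.ret Ve)) (.F A) ∧
  CLe cbpvStarP [] [] (some (.F A')) (some (.F A'))
    (.bind Sp (.ret Ve)) .hole (.F A') (.F A')

/-- A computation ep pair from `B` to `B'` in CBPV*: an embedding value
`z:UB ⊢ Ve : UB'` and a projection stack `•:B' ⊢ Sp : B` satisfying
retraction `z:UB ⊢ force z ⋈ Sp[force Ve] : B` and projection
`w:UB' ⊢ Ve[thunk(Sp[force w])/z] ⊑ w : UB'`. -/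
def CompEP (B B' : CTy) (Ve : Val) (Sp : Comp) : Prop :=
  VTyping cbpvStarP [.U B] Ve (.U B') ∧
  CTyping cbpvStarP [] (some B') Sp B ∧
  CEquiv cbpvStarP [.U B] none (.force (.var 0)) (plug Sp (.force Ve)) B ∧
  VLe cbpvStarP [.U B'] [.U B']
    (sub0V (.thunk (plug Sp (.force (.var 0)))) Ve) (.var 0) (.U B') (.U B')

set_option linter.dupNamespace false

theorem ctxDyn_refl : ∀ Γ : Ctx, CtxDyn Γ Γ
  | [] => List.Forall₂.nil
  | A :: Γ => List.Forall₂.cons (VDyn.refl A) (ctxDyn_refl Γ)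

theorem liftN_hh {f g h : Nat → Nat} (hh : ∀ n, h n = f (g n)) :
    ∀ n, liftN h n = liftN f (liftN g n)
  | 0 => rfl
  | n+1 => by simp [liftN, hh]

mutual
theorem ren_ren_V (f g h : Nat → Nat) (hh : ∀ n, h n = f (g n)) :
    ∀ V, renV f (renV g V) = renV h V
  | .var n => by simp [renV, hh]
  | .up A A' V => by simp [renV, ren_ren_V f g h hh V]
  | .unit => rfl
  | .inl V => by simp [renV, ren_ren_V f g h hh V]
  | .inr V => by simp [renV, ren_ren_V f g h hh V]
  | .pair V W => by simp [renV, ren_ren_V f g h hh V, ren_ren_V f g h hh W]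
  | .abortV V => by simp [renV, ren_ren_V f g h hh V]
  | .caseV V W₁ W₂ => by
      simp [renV, ren_ren_V f g h hh V,
        ren_ren_V _ _ _ (liftN_hh hh) W₁, ren_ren_V _ _ _ (liftN_hh hh) W₂]
  | .splitPV V W => by
      simp [renV, ren_ren_V f g h hh V, ren_ren_V _ _ _ (liftN_hh (liftN_hh hh)) W]
  | .splitUV V W => by simp [renV, ren_ren_V f g h hh V, ren_ren_V f g h hh W]
  | .rollV T V => by simp [renV, ren_ren_V f g h hh V]
  | .unrollPV V W => by
      simp [renV, ren_ren_V f g h hh V, ren_ren_V _ _ _ (liftN_hh hh) W]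
  | .thunk M => by simp [renV, ren_ren_C f g h hh M]
theorem ren_ren_C (f g h : Nat → Nat) (hh : ∀ n, h n = f (g n)) :
    ∀ M, renC f (renC g M) = renC h M
  | .hole => rfl
  | .err => rfl
  | .dn B B' M => by simp [renC, ren_ren_C f g h hh M]
  | .force V => by simp [renC, ren_ren_V f g h hh V]
  | .ret V => by simp [renC, ren_ren_V f g h hh V]
  | .bind M N => by simp [renC, ren_ren_C f g h hh M, ren_ren_C _ _ _ (liftN_hh hh) N]
  | .lam M => by simp [renC, ren_ren_C _ _ _ (liftN_hh hh) M]
  | .app M V => by simp [renC, ren_ren_C f g h hh M, ren_ren_V f g h hh V]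
  | .unitC => rfl
  | .pairC M N => by simp [renC, ren_ren_C f g h hh M, ren_ren_C f g h hh N]
  | .fst M => by simp [renC, ren_ren_C f g h hh M]
  | .snd M => by simp [renC, ren_ren_C f g h hh M]
  | .abortC V => by simp [renC, ren_ren_V f g h hh V]
  | .caseC V M₁ M₂ => by
      simp [renC, ren_ren_V f g h hh V,
        ren_ren_C _ _ _ (liftN_hh hh) M₁, ren_ren_C _ _ _ (liftN_hh hh) M₂]
  | .splitPC V M => by
      simp [renC, ren_ren_V f g h hh V, ren_ren_C _ _ _ (liftN_hh (liftN_hh hh)) M]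
  | .splitUC V M => by simp [renC, ren_ren_V f g h hh V, ren_ren_C f g h hh M]
  | .unrollPC V M => by
      simp [renC, ren_ren_V f g h hh V, ren_ren_C _ _ _ (liftN_hh hh) M]
  | .rollC T M => by simp [renC, ren_ren_C f g h hh M]
  | .unrollC M => by simp [renC, ren_ren_C f g h hh M]
end

theorem liftN_id {f : Nat → Nat} (hf : ∀ n, f n = n) : ∀ n, liftN f n = n
  | 0 => rfl
  | n+1 => by simp [liftN, hf]

mutual
theorem ren_id_V (f : Nat → Nat) (hf : ∀ n, f n = n) : ∀ V, renV f V = V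
  | .var n => by simp [renV, hf]
  | .up A A' V => by simp [renV, ren_id_V f hf V]
  | .unit => rfl
  | .inl V => by simp [renV, ren_id_V f hf V]
  | .inr V => by simp [renV, ren_id_V f hf V]
  | .pair V W => by simp [renV, ren_id_V f hf V, ren_id_V f hf W]
  | .abortV V => by simp [renV, ren_id_V f hf V]
  | .caseV V W₁ W₂ => by
      simp [renV, ren_id_V f hf V, ren_id_V _ (liftN_id hf) W₁, ren_id_V _ (liftN_id hf) W₂]
  | .splitPV V W => by
      simp [renV, ren_id_V f hf V, ren_id_V _ (liftN_id (liftN_id hf)) W]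
  | .splitUV V W => by simp [renV, ren_id_V f hf V, ren_id_V f hf W]
  | .rollV T V => by simp [renV, ren_id_V f hf V]
  | .unrollPV V W => by simp [renV, ren_id_V f hf V, ren_id_V _ (liftN_id hf) W]
  | .thunk M => by simp [renV, ren_id_C f hf M]
theorem ren_id_C (f : Nat → Nat) (hf : ∀ n, f n = n) : ∀ M, renC f M = M
  | .hole => rfl
  | .err => rfl
  | .dn B B' M => by simp [renC, ren_id_C f hf M]
  | .force V => by simp [renC, ren_id_V f hf V]
  | .ret V => by simp [renC, ren_id_V f hf V]
  | .bind M N => by simp [renC, ren_id_C f hf M, ren_id_C _ (liftN_id hf) N]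
  | .lam M => by simp [renC, ren_id_C _ (liftN_id hf) M]
  | .app M V => by simp [renC, ren_id_C f hf M, ren_id_V f hf V]
  | .unitC => rfl
  | .pairC M N => by simp [renC, ren_id_C f hf M, ren_id_C f hf N]
  | .fst M => by simp [renC, ren_id_C f hf M]
  | .snd M => by simp [renC, ren_id_C f hf M]
  | .abortC V => by simp [renC, ren_id_V f hf V]
  | .caseC V M₁ M₂ => by
      simp [renC, ren_id_V f hf V, ren_id_C _ (liftN_id hf) M₁, ren_id_C _ (liftN_id hf) M₂]
  | .splitPC V M => by
      simp [renC, ren_id_V f hf V, ren_id_C _ (liftN_id (liftN_id hf)) M]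
  | .splitUC V M => by simp [renC, ren_id_V f hf V, ren_id_C f hf M]
  | .unrollPC V M => by simp [renC, ren_id_V f hf V, ren_id_C _ (liftN_id hf) M]
  | .rollC T M => by simp [renC, ren_id_C f hf M]
  | .unrollC M => by simp [renC, ren_id_C f hf M]
end

theorem liftSub_sr {σ τ : Nat → Val} {f : Nat → Nat} (hh : ∀ n, τ n = σ (f n)) :
    ∀ n, liftSub τ n = liftSub σ (liftN f n)
  | 0 => rfl
  | n+1 => by simp [liftSub, liftN, hh]

theorem liftSub_rs {σ τ : Nat → Val} {f : Nat → Nat} (hh : ∀ n, τ n = renV f (σ n)) :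
    ∀ n, liftSub τ n = renV (liftN f) (liftSub σ n)
  | 0 => by simp [liftSub, renV, liftN]
  | n+1 => by
      simp only [liftSub, hh]
      rw [ren_ren_V Nat.succ f (fun m => f m + 1) (fun m => rfl),
          ren_ren_V (liftN f) Nat.succ (fun m => f m + 1) (fun m => rfl)]

theorem liftSub_id {σ : Nat → Val} (hh : ∀ n, σ n = .var n) :
    ∀ n, liftSub σ n = .var n
  | 0 => rfl
  | n+1 => by simp [liftSub, hh, renV]

mutual
theorem sub_ren_V {σ τ : Nat → Val} {f : Nat → Nat} (hh : ∀ n, τ n = σ (f n)) :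
    ∀ V, subV σ (renV f V) = subV τ V
  | .var n => by simp [renV, subV, hh]
  | .up A A' V => by simp [renV, renC, subV, subC, sub_ren_V (hh) V]
  | .unit => rfl
  | .inl V => by simp [renV, renC, subV, subC, sub_ren_V (hh) V]
  | .inr V => by simp [renV, renC, subV, subC, sub_ren_V (hh) V]
  | .pair V W => by simp [renV, renC, subV, subC, sub_ren_V (hh) V, sub_ren_V (hh) W]
  | .abortV V => by simp [renV, renC, subV, subC, sub_ren_V (hh) V]
  | .caseV V W₁ W₂ => by simp [renV, renC, subV, subC, sub_ren_V (hh) V, sub_ren_V (liftSub_sr hh) W₁, sub_ren_V (liftSub_sr hh) W₂]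
  | .splitPV V W => by simp [renV, renC, subV, subC, sub_ren_V (hh) V, sub_ren_V (liftSub_sr (liftSub_sr hh)) W]
  | .splitUV V W => by simp [renV, renC, subV, subC, sub_ren_V (hh) V, sub_ren_V (hh) W]
  | .rollV T V => by simp [renV, renC, subV, subC, sub_ren_V (hh) V]
  | .unrollPV V W => by simp [renV, renC, subV, subC, sub_ren_V (hh) V, sub_ren_V (liftSub_sr hh) W]
  | .thunk M => by simp [renV, renC, subV, subC, sub_ren_C (hh) M]
theorem sub_ren_C {σ τ : Nat → Val} {f : Nat → Nat} (hh : ∀ n, τ n = σ (f n)) :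
    ∀ M, subC σ (renC f M) = subC τ M
  | .hole => rfl
  | .err => rfl
  | .dn B B' M => by simp [renV, renC, subV, subC, sub_ren_C (hh) M]
  | .force V => by simp [renV, renC, subV, subC, sub_ren_V (hh) V]
  | .ret V => by simp [renV, renC, subV, subC, sub_ren_V (hh) V]
  | .bind M N => by simp [renV, renC, subV, subC, sub_ren_C (hh) M, sub_ren_C (liftSub_sr hh) N]
  | .lam M => by simp [renV, renC, subV, subC, sub_ren_C (liftSub_sr hh) M]
  | .app M V => by simp [renV, renC, subV, subC, sub_ren_C (hh) M, sub_ren_V (hh) V]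
  | .unitC => rfl
  | .pairC M N => by simp [renV, renC, subV, subC, sub_ren_C (hh) M, sub_ren_C (hh) N]
  | .fst M => by simp [renV, renC, subV, subC, sub_ren_C (hh) M]
  | .snd M => by simp [renV, renC, subV, subC, sub_ren_C (hh) M]
  | .abortC V => by simp [renV, renC, subV, subC, sub_ren_V (hh) V]
  | .caseC V M₁ M₂ => by simp [renV, renC, subV, subC, sub_ren_V (hh) V, sub_ren_C (liftSub_sr hh) M₁, sub_ren_C (liftSub_sr hh) M₂]
  | .splitPC V M => by simp [renV, renC, subV, subC, sub_ren_V (hh) V, sub_ren_C (liftSub_sr (liftSub_sr hh)) M]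
  | .splitUC V M => by simp [renV, renC, subV, subC, sub_ren_V (hh) V, sub_ren_C (hh) M]
  | .unrollPC V M => by simp [renV, renC, subV, subC, sub_ren_V (hh) V, sub_ren_C (liftSub_sr hh) M]
  | .rollC T M => by simp [renV, renC, subV, subC, sub_ren_C (hh) M]
  | .unrollC M => by simp [renV, renC, subV, subC, sub_ren_C (hh) M]
end

mutual
theorem ren_sub_V {σ τ : Nat → Val} {f : Nat → Nat} (hh : ∀ n, τ n = renV f (σ n)) :
    ∀ V, renV f (subV σ V) = subV τ V
  | .var n => by simp [renV, subV, hh]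
  | .up A A' V => by simp [renV, renC, subV, subC, ren_sub_V (hh) V]
  | .unit => rfl
  | .inl V => by simp [renV, renC, subV, subC, ren_sub_V (hh) V]
  | .inr V => by simp [renV, renC, subV, subC, ren_sub_V (hh) V]
  | .pair V W => by simp [renV, renC, subV, subC, ren_sub_V (hh) V, ren_sub_V (hh) W]
  | .abortV V => by simp [renV, renC, subV, subC, ren_sub_V (hh) V]
  | .caseV V W₁ W₂ => by simp [renV, renC, subV, subC, ren_sub_V (hh) V, ren_sub_V (liftSub_rs hh) W₁, ren_sub_V (liftSub_rs hh) W₂]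
  | .splitPV V W => by simp [renV, renC, subV, subC, ren_sub_V (hh) V, ren_sub_V (liftSub_rs (liftSub_rs hh)) W]
  | .splitUV V W => by simp [renV, renC, subV, subC, ren_sub_V (hh) V, ren_sub_V (hh) W]
  | .rollV T V => by simp [renV, renC, subV, subC, ren_sub_V (hh) V]
  | .unrollPV V W => by simp [renV, renC, subV, subC, ren_sub_V (hh) V, ren_sub_V (liftSub_rs hh) W]
  | .thunk M => by simp [renV, renC, subV, subC, ren_sub_C (hh) M]
theorem ren_sub_C {σ τ : Nat → Val} {f : Nat → Nat} (hh : ∀ n, τ n = renV f (σ n)) :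
    ∀ M, renC f (subC σ M) = subC τ M
  | .hole => rfl
  | .err => rfl
  | .dn B B' M => by simp [renV, renC, subV, subC, ren_sub_C (hh) M]
  | .force V => by simp [renV, renC, subV, subC, ren_sub_V (hh) V]
  | .ret V => by simp [renV, renC, subV, subC, ren_sub_V (hh) V]
  | .bind M N => by simp [renV, renC, subV, subC, ren_sub_C (hh) M, ren_sub_C (liftSub_rs hh) N]
  | .lam M => by simp [renV, renC, subV, subC, ren_sub_C (liftSub_rs hh) M]
  | .app M V => by simp [renV, renC, subV, subC, ren_sub_C (hh) M, ren_sub_V (hh) V]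
  | .unitC => rfl
  | .pairC M N => by simp [renV, renC, subV, subC, ren_sub_C (hh) M, ren_sub_C (hh) N]
  | .fst M => by simp [renV, renC, subV, subC, ren_sub_C (hh) M]
  | .snd M => by simp [renV, renC, subV, subC, ren_sub_C (hh) M]
  | .abortC V => by simp [renV, renC, subV, subC, ren_sub_V (hh) V]
  | .caseC V M₁ M₂ => by simp [renV, renC, subV, subC, ren_sub_V (hh) V, ren_sub_C (liftSub_rs hh) M₁, ren_sub_C (liftSub_rs hh) M₂]
  | .splitPC V M => by simp [renV, renC, subV, subC, ren_sub_V (hh) V, ren_sub_C (liftSub_rs (liftSub_rs hh)) M]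
  | .splitUC V M => by simp [renV, renC, subV, subC, ren_sub_V (hh) V, ren_sub_C (hh) M]
  | .unrollPC V M => by simp [renV, renC, subV, subC, ren_sub_V (hh) V, ren_sub_C (liftSub_rs hh) M]
  | .rollC T M => by simp [renV, renC, subV, subC, ren_sub_C (hh) M]
  | .unrollC M => by simp [renV, renC, subV, subC, ren_sub_C (hh) M]
end

theorem liftSub_ss {σ τ ρ : Nat → Val} (hh : ∀ n, ρ n = subV σ (τ n)) :
    ∀ n, liftSub ρ n = subV (liftSub σ) (liftSub τ n)
  | 0 => rfl
  | n+1 => by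
      simp only [liftSub, hh]
      rw [ren_sub_V (σ := σ) (τ := fun m => renV Nat.succ (σ m)) (fun m => rfl),
          sub_ren_V (σ := liftSub σ) (τ := fun m => renV Nat.succ (σ m)) (f := Nat.succ) (fun m => rfl)]

mutual
theorem sub_sub_V {σ τ ρ : Nat → Val} (hh : ∀ n, ρ n = subV σ (τ n)) :
    ∀ V, subV σ (subV τ V) = subV ρ V
  | .var n => by simp [subV, hh]
  | .up A A' V => by simp [renV, renC, subV, subC, sub_sub_V (hh) V]
  | .unit => rfl
  | .inl V => by simp [renV, renC, subV, subC, sub_sub_V (hh) V]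
  | .inr V => by simp [renV, renC, subV, subC, sub_sub_V (hh) V]
  | .pair V W => by simp [renV, renC, subV, subC, sub_sub_V (hh) V, sub_sub_V (hh) W]
  | .abortV V => by simp [renV, renC, subV, subC, sub_sub_V (hh) V]
  | .caseV V W₁ W₂ => by simp [renV, renC, subV, subC, sub_sub_V (hh) V, sub_sub_V (liftSub_ss hh) W₁, sub_sub_V (liftSub_ss hh) W₂]
  | .splitPV V W => by simp [renV, renC, subV, subC, sub_sub_V (hh) V, sub_sub_V (liftSub_ss (liftSub_ss hh)) W]
  | .splitUV V W => by simp [renV, renC, subV, subC, sub_sub_V (hh) V, sub_sub_V (hh) W]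
  | .rollV T V => by simp [renV, renC, subV, subC, sub_sub_V (hh) V]
  | .unrollPV V W => by simp [renV, renC, subV, subC, sub_sub_V (hh) V, sub_sub_V (liftSub_ss hh) W]
  | .thunk M => by simp [renV, renC, subV, subC, sub_sub_C (hh) M]
theorem sub_sub_C {σ τ ρ : Nat → Val} (hh : ∀ n, ρ n = subV σ (τ n)) :
    ∀ M, subC σ (subC τ M) = subC ρ M
  | .hole => rfl
  | .err => rfl
  | .dn B B' M => by simp [renV, renC, subV, subC, sub_sub_C (hh) M]
  | .force V => by simp [renV, renC, subV, subC, sub_sub_V (hh) V]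
  | .ret V => by simp [renV, renC, subV, subC, sub_sub_V (hh) V]
  | .bind M N => by simp [renV, renC, subV, subC, sub_sub_C (hh) M, sub_sub_C (liftSub_ss hh) N]
  | .lam M => by simp [renV, renC, subV, subC, sub_sub_C (liftSub_ss hh) M]
  | .app M V => by simp [renV, renC, subV, subC, sub_sub_C (hh) M, sub_sub_V (hh) V]
  | .unitC => rfl
  | .pairC M N => by simp [renV, renC, subV, subC, sub_sub_C (hh) M, sub_sub_C (hh) N]
  | .fst M => by simp [renV, renC, subV, subC, sub_sub_C (hh) M]
  | .snd M => by simp [renV, renC, subV, subC, sub_sub_C (hh) M]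
  | .abortC V => by simp [renV, renC, subV, subC, sub_sub_V (hh) V]
  | .caseC V M₁ M₂ => by simp [renV, renC, subV, subC, sub_sub_V (hh) V, sub_sub_C (liftSub_ss hh) M₁, sub_sub_C (liftSub_ss hh) M₂]
  | .splitPC V M => by simp [renV, renC, subV, subC, sub_sub_V (hh) V, sub_sub_C (liftSub_ss (liftSub_ss hh)) M]
  | .splitUC V M => by simp [renV, renC, subV, subC, sub_sub_V (hh) V, sub_sub_C (hh) M]
  | .unrollPC V M => by simp [renV, renC, subV, subC, sub_sub_V (hh) V, sub_sub_C (liftSub_ss hh) M]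
  | .rollC T M => by simp [renV, renC, subV, subC, sub_sub_C (hh) M]
  | .unrollC M => by simp [renV, renC, subV, subC, sub_sub_C (hh) M]
end

mutual
theorem sub_id_V {σ : Nat → Val} (hh : ∀ n, σ n = .var n) :
    ∀ V, subV σ V = V
  | .var n => by simp [subV, hh]
  | .up A A' V => by simp [renV, renC, subV, subC, sub_id_V (hh) V]
  | .unit => rfl
  | .inl V => by simp [renV, renC, subV, subC, sub_id_V (hh) V]
  | .inr V => by simp [renV, renC, subV, subC, sub_id_V (hh) V]
  | .pair V W => by simp [renV, renC, subV, subC, sub_id_V (hh) V, sub_id_V (hh) W]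
  | .abortV V => by simp [renV, renC, subV, subC, sub_id_V (hh) V]
  | .caseV V W₁ W₂ => by simp [renV, renC, subV, subC, sub_id_V (hh) V, sub_id_V (liftSub_id hh) W₁, sub_id_V (liftSub_id hh) W₂]
  | .splitPV V W => by simp [renV, renC, subV, subC, sub_id_V (hh) V, sub_id_V (liftSub_id (liftSub_id hh)) W]
  | .splitUV V W => by simp [renV, renC, subV, subC, sub_id_V (hh) V, sub_id_V (hh) W]
  | .rollV T V => by simp [renV, renC, subV, subC, sub_id_V (hh) V]
  | .unrollPV V W => by simp [renV, renC, subV, subC, sub_id_V (hh) V, sub_id_V (liftSub_id hh) W]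
  | .thunk M => by simp [renV, renC, subV, subC, sub_id_C (hh) M]
theorem sub_id_C {σ : Nat → Val} (hh : ∀ n, σ n = .var n) :
    ∀ M, subC σ M = M
  | .hole => rfl
  | .err => rfl
  | .dn B B' M => by simp [renV, renC, subV, subC, sub_id_C (hh) M]
  | .force V => by simp [renV, renC, subV, subC, sub_id_V (hh) V]
  | .ret V => by simp [renV, renC, subV, subC, sub_id_V (hh) V]
  | .bind M N => by simp [renV, renC, subV, subC, sub_id_C (hh) M, sub_id_C (liftSub_id hh) N]
  | .lam M => by simp [renV, renC, subV, subC, sub_id_C (liftSub_id hh) M]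
  | .app M V => by simp [renV, renC, subV, subC, sub_id_C (hh) M, sub_id_V (hh) V]
  | .unitC => rfl
  | .pairC M N => by simp [renV, renC, subV, subC, sub_id_C (hh) M, sub_id_C (hh) N]
  | .fst M => by simp [renV, renC, subV, subC, sub_id_C (hh) M]
  | .snd M => by simp [renV, renC, subV, subC, sub_id_C (hh) M]
  | .abortC V => by simp [renV, renC, subV, subC, sub_id_V (hh) V]
  | .caseC V M₁ M₂ => by simp [renV, renC, subV, subC, sub_id_V (hh) V, sub_id_C (liftSub_id hh) M₁, sub_id_C (liftSub_id hh) M₂]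
  | .splitPC V M => by simp [renV, renC, subV, subC, sub_id_V (hh) V, sub_id_C (liftSub_id (liftSub_id hh)) M]
  | .splitUC V M => by simp [renV, renC, subV, subC, sub_id_V (hh) V, sub_id_C (hh) M]
  | .unrollPC V M => by simp [renV, renC, subV, subC, sub_id_V (hh) V, sub_id_C (liftSub_id hh) M]
  | .rollC T M => by simp [renV, renC, subV, subC, sub_id_C (hh) M]
  | .unrollC M => by simp [renV, renC, subV, subC, sub_id_C (hh) M]
end
theorem liftGet {Γ Γ' : Ctx} {f : Nat → Nat} {A : VTy}
    (hf : ∀ n B, Γ[n]? = some B → Γ'[(f n)]? = some B) :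
    ∀ n B, (A::Γ)[n]? = some B → (A::Γ')[(liftN f n)]? = some B := by
  intro n B h
  cases n with
  | zero => exact h
  | succ n => exact hf n B h

mutual
theorem renTyV {P Γ V A Γ' f} (h : VTyping P Γ V A)
    (hf : ∀ n B, Γ[n]? = some B → Γ'[(f n)]? = some B) :
    VTyping P Γ' (renV f V) A := by
  match h with
  | .var hg => exact .var (hf _ _ hg)
  | .up hu h => exact .up hu (renTyV h hf)
  | .unit => exact .unit
  | .inl h => exact .inl (renTyV h hf)
  | .inr h => exact .inr (renTyV h hf)
  | .pair h1 h2 => exact .pair (renTyV h1 hf) (renTyV h2 hf)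
  | .abortV hcx h => exact .abortV hcx (renTyV h hf)
  | .caseV hcx h h1 h2 =>
      exact .caseV hcx (renTyV h hf) (renTyV h1 (liftGet hf)) (renTyV h2 (liftGet hf))
  | .splitPV hcx h h1 =>
      exact .splitPV hcx (renTyV h hf) (renTyV h1 (liftGet (liftGet hf)))
  | .splitUV hcx h h1 => exact .splitUV hcx (renTyV h hf) (renTyV h1 hf)
  | .rollV hr h => exact .rollV hr (renTyV h hf)
  | .unrollPV hcx hr h h1 =>
      exact .unrollPV hcx hr (renTyV h hf) (renTyV h1 (liftGet hf))
  | .thunk h => exact .thunk (renTyC h hf)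
theorem renTyC {P Γ Δ M B Γ' f} (h : CTyping P Γ Δ M B)
    (hf : ∀ n B, Γ[n]? = some B → Γ'[(f n)]? = some B) :
    CTyping P Γ' Δ (renC f M) B := by
  match h with
  | .hole => exact .hole
  | .err => exact .err
  | .dn hd h => exact .dn hd (renTyC h hf)
  | .force h => exact .force (renTyV h hf)
  | .ret h => exact .ret (renTyV h hf)
  | .bind h h1 => exact .bind (renTyC h hf) (renTyC h1 (liftGet hf))
  | .lam hs h => exact .lam hs (renTyC h (liftGet hf))
  | .app h hv => exact .app (renTyC h hf) (renTyV hv hf)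
  | .unitC hs => exact .unitC hs
  | .pairC hs h1 h2 => exact .pairC hs (renTyC h1 hf) (renTyC h2 hf)
  | .fst h => exact .fst (renTyC h hf)
  | .snd h => exact .snd (renTyC h hf)
  | .abortC hs hv => exact .abortC hs (renTyV hv hf)
  | .caseC hs hv h1 h2 =>
      exact .caseC hs (renTyV hv hf) (renTyC h1 (liftGet hf)) (renTyC h2 (liftGet hf))
  | .splitPC hs hv h1 =>
      exact .splitPC hs (renTyV hv hf) (renTyC h1 (liftGet (liftGet hf)))
  | .splitUC hs hv h1 => exact .splitUC hs (renTyV hv hf) (renTyC h1 hf)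
  | .unrollPC hs hr hv h1 =>
      exact .unrollPC hs hr (renTyV hv hf) (renTyC h1 (liftGet hf))
  | .rollC hr h => exact .rollC hr (renTyC h hf)
  | .unrollC hr h => exact .unrollC hr (renTyC h hf)
end

theorem getAppend {Γ : Ctx} (Ξ : Ctx) :
    ∀ (n : Nat) B, Γ[n]? = some B → (Γ ++ Ξ)[n]? = some B := by
  intro n B h
  have hl : n < Γ.length := by
    by_contra hn
    rw [List.getElem?_eq_none (Nat.le_of_not_lt hn)] at h
    simp at h
  rw [List.getElem?_append_left hl]; exact h

theorem wkV {P Γ V A} (h : VTyping P Γ V A) (Ξ : Ctx) : VTyping P (Γ ++ Ξ) V A := by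
  have := renTyV (f := fun n => n) h (getAppend Ξ)
  rwa [ren_id_V _ (fun n => rfl)] at this

theorem wkC {P Γ Δ M B} (h : CTyping P Γ Δ M B) (Ξ : Ctx) : CTyping P (Γ ++ Ξ) Δ M B := by
  have := renTyC (f := fun n => n) h (getAppend Ξ)
  rwa [ren_id_C _ (fun n => rfl)] at this

theorem liftSubTy {P : Policy} {Γ Γ' : Ctx} {σ : Nat → Val} {A : VTy}
    (hσ : ∀ n B, Γ[n]? = some B → VTyping P Γ' (σ n) B) :
    ∀ n B, (A::Γ)[n]? = some B → VTyping P (A::Γ') (liftSub σ n) B := by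
  intro n B h
  cases n with
  | zero => cases h; exact .var rfl
  | succ n =>
      exact renTyV (f := Nat.succ) (hσ n B h) (fun m B hm => hm)

mutual
theorem subTyV {P Γ V A Γ' σ} (h : VTyping P Γ V A)
    (hσ : ∀ n B, Γ[n]? = some B → VTyping P Γ' (σ n) B) :
    VTyping P Γ' (subV σ V) A := by
  match h with
  | .var hg => exact hσ _ _ hg
  | .up hu h => exact .up hu (subTyV h hσ)
  | .unit => exact .unit
  | .inl h => exact .inl (subTyV h hσ)
  | .inr h => exact .inr (subTyV h hσ)
  | .pair h1 h2 => exact .pair (subTyV h1 hσ) (subTyV h2 hσ)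
  | .abortV hcx h => exact .abortV hcx (subTyV h hσ)
  | .caseV hcx h h1 h2 =>
      exact .caseV hcx (subTyV h hσ) (subTyV h1 (liftSubTy hσ)) (subTyV h2 (liftSubTy hσ))
  | .splitPV hcx h h1 =>
      exact .splitPV hcx (subTyV h hσ) (subTyV h1 (liftSubTy (liftSubTy hσ)))
  | .splitUV hcx h h1 => exact .splitUV hcx (subTyV h hσ) (subTyV h1 hσ)
  | .rollV hr h => exact .rollV hr (subTyV h hσ)
  | .unrollPV hcx hr h h1 =>
      exact .unrollPV hcx hr (subTyV h hσ) (subTyV h1 (liftSubTy hσ))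
  | .thunk h => exact .thunk (subTyC h hσ)
theorem subTyC {P Γ Δ M B Γ' σ} (h : CTyping P Γ Δ M B)
    (hσ : ∀ n B, Γ[n]? = some B → VTyping P Γ' (σ n) B) :
    CTyping P Γ' Δ (subC σ M) B := by
  match h with
  | .hole => exact .hole
  | .err => exact .err
  | .dn hd h => exact .dn hd (subTyC h hσ)
  | .force h => exact .force (subTyV h hσ)
  | .ret h => exact .ret (subTyV h hσ)
  | .bind h h1 => exact .bind (subTyC h hσ) (subTyC h1 (liftSubTy hσ))
  | .lam hs h => exact .lam hs (subTyC h (liftSubTy hσ))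
  | .app h hv => exact .app (subTyC h hσ) (subTyV hv hσ)
  | .unitC hs => exact .unitC hs
  | .pairC hs h1 h2 => exact .pairC hs (subTyC h1 hσ) (subTyC h2 hσ)
  | .fst h => exact .fst (subTyC h hσ)
  | .snd h => exact .snd (subTyC h hσ)
  | .abortC hs hv => exact .abortC hs (subTyV hv hσ)
  | .caseC hs hv h1 h2 =>
      exact .caseC hs (subTyV hv hσ) (subTyC h1 (liftSubTy hσ)) (subTyC h2 (liftSubTy hσ))
  | .splitPC hs hv h1 =>
      exact .splitPC hs (subTyV hv hσ) (subTyC h1 (liftSubTy (liftSubTy hσ)))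
  | .splitUC hs hv h1 => exact .splitUC hs (subTyV hv hσ) (subTyC h1 hσ)
  | .unrollPC hs hr hv h1 =>
      exact .unrollPC hs hr (subTyV hv hσ) (subTyC h1 (liftSubTy hσ))
  | .rollC hr h => exact .rollC hr (subTyC h hσ)
  | .unrollC hr h => exact .unrollC hr (subTyC h hσ)
end
theorem liftAgr {Γ : Ctx} {f g : Nat → Nat} {A : VTy}
    (h : ∀ n, n < Γ.length → f n = g n) :
    ∀ n, n < (A::Γ).length → liftN f n = liftN g n := by
  intro n hn
  cases n with
  | zero => rfl
  | succ n => simp only [liftN]; rw [h n (by simpa using hn)]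

mutual
theorem renAgrV {P Γ V A} {f g : Nat → Nat} (h : VTyping P Γ V A)
    (hfg : ∀ n, n < Γ.length → f n = g n) : renV f V = renV g V := by
  match h with
  | .var (n := n) hg =>
      have : n < Γ.length := by
        by_contra hn
        rw [List.getElem?_eq_none (Nat.le_of_not_lt hn)] at hg
        simp at hg
      simp only [renV]; rw [hfg n this]
  | .up hu h => simp only [renV]; rw [renAgrV h hfg]
  | .unit => rfl
  | .inl h => simp only [renV]; rw [renAgrV h hfg]
  | .inr h => simp only [renV]; rw [renAgrV h hfg]
  | .pair h1 h2 => simp only [renV]; rw [renAgrV h1 hfg, renAgrV h2 hfg]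
  | .abortV hcx h => simp only [renV]; rw [renAgrV h hfg]
  | .caseV hcx h h1 h2 =>
      simp only [renV]; rw [renAgrV h hfg, renAgrV h1 (liftAgr hfg), renAgrV h2 (liftAgr hfg)]
  | .splitPV hcx h h1 =>
      simp only [renV]; rw [renAgrV h hfg, renAgrV h1 (liftAgr (liftAgr hfg))]
  | .splitUV hcx h h1 => simp only [renV]; rw [renAgrV h hfg, renAgrV h1 hfg]
  | .rollV hr h => simp only [renV]; rw [renAgrV h hfg]
  | .unrollPV hcx hr h h1 =>
      simp only [renV]; rw [renAgrV h hfg, renAgrV h1 (liftAgr hfg)]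
  | .thunk h => simp only [renV]; rw [renAgrC h hfg]
theorem renAgrC {P Γ Δ M B} {f g : Nat → Nat} (h : CTyping P Γ Δ M B)
    (hfg : ∀ n, n < Γ.length → f n = g n) : renC f M = renC g M := by
  match h with
  | .hole => rfl
  | .err => rfl
  | .dn hd h => simp only [renC]; rw [renAgrC h hfg]
  | .force h => simp only [renC]; rw [renAgrV h hfg]
  | .ret h => simp only [renC]; rw [renAgrV h hfg]
  | .bind h h1 => simp only [renC]; rw [renAgrC h hfg, renAgrC h1 (liftAgr hfg)]
  | .lam hs h => simp only [renC]; rw [renAgrC h (liftAgr hfg)]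
  | .app h hv => simp only [renC]; rw [renAgrC h hfg, renAgrV hv hfg]
  | .unitC hs => rfl
  | .pairC hs h1 h2 => simp only [renC]; rw [renAgrC h1 hfg, renAgrC h2 hfg]
  | .fst h => simp only [renC]; rw [renAgrC h hfg]
  | .snd h => simp only [renC]; rw [renAgrC h hfg]
  | .abortC hs hv => simp only [renC]; rw [renAgrV hv hfg]
  | .caseC hs hv h1 h2 =>
      simp only [renC]; rw [renAgrV hv hfg, renAgrC h1 (liftAgr hfg), renAgrC h2 (liftAgr hfg)]
  | .splitPC hs hv h1 =>
      simp only [renC]; rw [renAgrV hv hfg, renAgrC h1 (liftAgr (liftAgr hfg))]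
  | .splitUC hs hv h1 => simp only [renC]; rw [renAgrV hv hfg, renAgrC h1 hfg]
  | .unrollPC hs hr hv h1 =>
      simp only [renC]; rw [renAgrV hv hfg, renAgrC h1 (liftAgr hfg)]
  | .rollC hr h => simp only [renC]; rw [renAgrC h hfg]
  | .unrollC hr h => simp only [renC]; rw [renAgrC h hfg]
end

theorem liftSubAgr {Γ : Ctx} {σ τ : Nat → Val} {A : VTy}
    (h : ∀ n, n < Γ.length → σ n = τ n) :
    ∀ n, n < (A::Γ).length → liftSub σ n = liftSub τ n := by
  intro n hn
  cases n with
  | zero => rfl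
  | succ n => simp only [liftSub]; rw [h n (by simpa using hn)]

mutual
theorem subAgrV {P Γ V A} {σ τ : Nat → Val} (h : VTyping P Γ V A)
    (hfg : ∀ n, n < Γ.length → σ n = τ n) : subV σ V = subV τ V := by
  match h with
  | .var (n := n) hg =>
      have : n < Γ.length := by
        by_contra hn
        rw [List.getElem?_eq_none (Nat.le_of_not_lt hn)] at hg
        simp at hg
      simp only [subV]; rw [hfg n this]
  | .up hu h => simp only [subV]; rw [subAgrV h hfg]
  | .unit => rfl
  | .inl h => simp only [subV]; rw [subAgrV h hfg]
  | .inr h => simp only [subV]; rw [subAgrV h hfg]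
  | .pair h1 h2 => simp only [subV]; rw [subAgrV h1 hfg, subAgrV h2 hfg]
  | .abortV hcx h => simp only [subV]; rw [subAgrV h hfg]
  | .caseV hcx h h1 h2 =>
      simp only [subV]; rw [subAgrV h hfg, subAgrV h1 (liftSubAgr hfg), subAgrV h2 (liftSubAgr hfg)]
  | .splitPV hcx h h1 =>
      simp only [subV]; rw [subAgrV h hfg, subAgrV h1 (liftSubAgr (liftSubAgr hfg))]
  | .splitUV hcx h h1 => simp only [subV]; rw [subAgrV h hfg, subAgrV h1 hfg]
  | .rollV hr h => simp only [subV]; rw [subAgrV h hfg]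
  | .unrollPV hcx hr h h1 =>
      simp only [subV]; rw [subAgrV h hfg, subAgrV h1 (liftSubAgr hfg)]
  | .thunk h => simp only [subV]; rw [subAgrC h hfg]
theorem subAgrC {P Γ Δ M B} {σ τ : Nat → Val} (h : CTyping P Γ Δ M B)
    (hfg : ∀ n, n < Γ.length → σ n = τ n) : subC σ M = subC τ M := by
  match h with
  | .hole => rfl
  | .err => rfl
  | .dn hd h => simp only [subC]; rw [subAgrC h hfg]
  | .force h => simp only [subC]; rw [subAgrV h hfg]
  | .ret h => simp only [subC]; rw [subAgrV h hfg]
  | .bind h h1 => simp only [subC]; rw [subAgrC h hfg, subAgrC h1 (liftSubAgr hfg)]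
  | .lam hs h => simp only [subC]; rw [subAgrC h (liftSubAgr hfg)]
  | .app h hv => simp only [subC]; rw [subAgrC h hfg, subAgrV hv hfg]
  | .unitC hs => rfl
  | .pairC hs h1 h2 => simp only [subC]; rw [subAgrC h1 hfg, subAgrC h2 hfg]
  | .fst h => simp only [subC]; rw [subAgrC h hfg]
  | .snd h => simp only [subC]; rw [subAgrC h hfg]
  | .abortC hs hv => simp only [subC]; rw [subAgrV hv hfg]
  | .caseC hs hv h1 h2 =>
      simp only [subC]; rw [subAgrV hv hfg, subAgrC h1 (liftSubAgr hfg), subAgrC h2 (liftSubAgr hfg)]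
  | .splitPC hs hv h1 =>
      simp only [subC]; rw [subAgrV hv hfg, subAgrC h1 (liftSubAgr (liftSubAgr hfg))]
  | .splitUC hs hv h1 => simp only [subC]; rw [subAgrV hv hfg, subAgrC h1 hfg]
  | .unrollPC hs hr hv h1 =>
      simp only [subC]; rw [subAgrV hv hfg, subAgrC h1 (liftSubAgr hfg)]
  | .rollC hr h => simp only [subC]; rw [subAgrC h hfg]
  | .unrollC hr h => simp only [subC]; rw [subAgrC h hfg]
end

-- no-hole lemma
mutual
theorem noHoleV {P Γ V A} (h : VTyping P Γ V A) : ∀ (N : Comp) (d : Nat), plugV N d V = V := by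
  match h with
  | .var hg => intro N d; rfl
  | .up hu h => intro N d; simp only [plugV]; rw [noHoleV h]
  | .unit => intro N d; rfl
  | .inl h => intro N d; simp only [plugV]; rw [noHoleV h]
  | .inr h => intro N d; simp only [plugV]; rw [noHoleV h]
  | .pair h1 h2 => intro N d; simp only [plugV]; rw [noHoleV h1, noHoleV h2]
  | .abortV hcx h => intro N d; simp only [plugV]; rw [noHoleV h]
  | .caseV hcx h h1 h2 => intro N d; simp only [plugV]; rw [noHoleV h, noHoleV h1, noHoleV h2]
  | .splitPV hcx h h1 => intro N d; simp only [plugV]; rw [noHoleV h, noHoleV h1]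
  | .splitUV hcx h h1 => intro N d; simp only [plugV]; rw [noHoleV h, noHoleV h1]
  | .rollV hr h => intro N d; simp only [plugV]; rw [noHoleV h]
  | .unrollPV hcx hr h h1 => intro N d; simp only [plugV]; rw [noHoleV h, noHoleV h1]
  | .thunk h => intro N d; simp only [plugV]; rw [noHoleC h rfl]
theorem noHoleC {P Γ Δ M B} (h : CTyping P Γ Δ M B) (hΔ : Δ = none) :
    ∀ (N : Comp) (d : Nat), plugC N d M = M := by
  match h with
  | .hole => exact absurd hΔ (by simp)
  | .err => intro N d; rfl
  | .dn hd h => intro N d; simp only [plugC]; rw [noHoleC h hΔ]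
  | .force h => intro N d; simp only [plugC]; rw [noHoleV h]
  | .ret h => intro N d; simp only [plugC]; rw [noHoleV h]
  | .bind h h1 => intro N d; simp only [plugC]; rw [noHoleC h hΔ, noHoleC h1 rfl]
  | .lam hs h => intro N d; simp only [plugC]; rw [noHoleC h hΔ]
  | .app h hv => intro N d; simp only [plugC]; rw [noHoleC h hΔ, noHoleV hv]
  | .unitC hs => intro N d; rfl
  | .pairC hs h1 h2 => intro N d; simp only [plugC]; rw [noHoleC h1 hΔ, noHoleC h2 hΔ]
  | .fst h => intro N d; simp only [plugC]; rw [noHoleC h hΔ]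
  | .snd h => intro N d; simp only [plugC]; rw [noHoleC h hΔ]
  | .abortC hs hv => intro N d; simp only [plugC]; rw [noHoleV hv]
  | .caseC hs hv h1 h2 =>
      intro N d; simp only [plugC]; rw [noHoleV hv, noHoleC h1 hΔ, noHoleC h2 hΔ]
  | .splitPC hs hv h1 => intro N d; simp only [plugC]; rw [noHoleV hv, noHoleC h1 hΔ]
  | .splitUC hs hv h1 => intro N d; simp only [plugC]; rw [noHoleV hv, noHoleC h1 hΔ]
  | .unrollPC hs hr hv h1 => intro N d; simp only [plugC]; rw [noHoleV hv, noHoleC h1 hΔ]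
  | .rollC hr h => intro N d; simp only [plugC]; rw [noHoleC h hΔ]
  | .unrollC hr h => intro N d; simp only [plugC]; rw [noHoleC h hΔ]
end
theorem liftIf {g : Nat → Nat} {k d : Nat} (hg : ∀ n, g n = if n < k then n else n + d) :
    ∀ n, liftN g n = if n < k + 1 then n else n + d := by
  intro n
  cases n with
  | zero => simp [liftN]
  | succ n =>
      simp only [liftN, hg]
      by_cases hnk : n < k
      · simp [hnk, Nat.succ_lt_succ_iff]
      · simp [hnk, Nat.succ_lt_succ_iff]; omega

mutual
theorem renPlugV (X : Comp) (d : Nat) :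
    ∀ (W : Val) (k : Nat) (g : Nat → Nat), (∀ n, g n = if n < k then n else n + d) →
    plugV X (k + d) (renV g W) = renV g (plugV X k W)
  | .var n => by intro k g hg; simp [renV, renC, plugV, plugC]
  | .up A A' V => by
      intro k g hg
      simp only [renV, renC, plugV, plugC]
      rw [renPlugV X d V k _ hg]
  | .unit => by intro k g hg; simp [renV, renC, plugV, plugC]
  | .inl V => by
      intro k g hg
      simp only [renV, renC, plugV, plugC]
      rw [renPlugV X d V k _ hg]
  | .inr V => by
      intro k g hg
      simp only [renV, renC, plugV, plugC]
      rw [renPlugV X d V k _ hg]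
  | .pair V W => by
      intro k g hg
      simp only [renV, renC, plugV, plugC]
      rw [renPlugV X d V k _ hg, renPlugV X d W k _ hg]
  | .abortV V => by
      intro k g hg
      simp only [renV, renC, plugV, plugC]
      rw [renPlugV X d V k _ hg]
  | .caseV V W₁ W₂ => by
      intro k g hg
      simp only [renV, renC, plugV, plugC]
      rw [show k + d + 1 = (k + 1) + d from by omega]
      rw [renPlugV X d V k _ hg, renPlugV X d W₁ (k + 1) _ (liftIf hg), renPlugV X d W₂ (k + 1) _ (liftIf hg)]
  | .splitPV V W => by
      intro k g hg
      simp only [renV, renC, plugV, plugC]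
      rw [show k + d + 2 = (k + 2) + d from by omega]
      rw [renPlugV X d V k _ hg, renPlugV X d W (k + 2) _ (liftIf (liftIf hg))]
  | .splitUV V W => by
      intro k g hg
      simp only [renV, renC, plugV, plugC]
      rw [renPlugV X d V k _ hg, renPlugV X d W k _ hg]
  | .rollV T V => by
      intro k g hg
      simp only [renV, renC, plugV, plugC]
      rw [renPlugV X d V k _ hg]
  | .unrollPV V W => by
      intro k g hg
      simp only [renV, renC, plugV, plugC]
      rw [show k + d + 1 = (k + 1) + d from by omega]
      rw [renPlugV X d V k _ hg, renPlugV X d W (k + 1) _ (liftIf hg)]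
  | .thunk M => by
      intro k g hg
      simp only [renV, renC, plugV, plugC]
      rw [renPlugC X d M k _ hg]
theorem renPlugC (X : Comp) (d : Nat) :
    ∀ (S : Comp) (k : Nat) (g : Nat → Nat), (∀ n, g n = if n < k then n else n + d) →
    plugC X (k + d) (renC g S) = renC g (plugC X k S)
  | .hole => by
      intro k g hg
      simp only [renC, plugC]
      rw [ren_ren_C g (fun n => n + k) (fun n => n + (k + d))
        (by intro n; rw [hg]; simp [Nat.not_lt.mpr (Nat.le_add_left k n)]; omega) X]
  | .err => by intro k g hg; simp [renV, renC, plugV, plugC]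
  | .dn B B' M => by
      intro k g hg
      simp only [renV, renC, plugV, plugC]
      rw [renPlugC X d M k _ hg]
  | .force V => by
      intro k g hg
      simp only [renV, renC, plugV, plugC]
      rw [renPlugV X d V k _ hg]
  | .ret V => by
      intro k g hg
      simp only [renV, renC, plugV, plugC]
      rw [renPlugV X d V k _ hg]
  | .bind M N => by
      intro k g hg
      simp only [renV, renC, plugV, plugC]
      rw [show k + d + 1 = (k + 1) + d from by omega]
      rw [renPlugC X d M k _ hg, renPlugC X d N (k + 1) _ (liftIf hg)]
  | .lam M => by
      intro k g hg
      simp only [renV, renC, plugV, plugC]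
      rw [show k + d + 1 = (k + 1) + d from by omega]
      rw [renPlugC X d M (k + 1) _ (liftIf hg)]
  | .app M V => by
      intro k g hg
      simp only [renV, renC, plugV, plugC]
      rw [renPlugC X d M k _ hg, renPlugV X d V k _ hg]
  | .unitC => by intro k g hg; simp [renV, renC, plugV, plugC]
  | .pairC M N => by
      intro k g hg
      simp only [renV, renC, plugV, plugC]
      rw [renPlugC X d M k _ hg, renPlugC X d N k _ hg]
  | .fst M => by
      intro k g hg
      simp only [renV, renC, plugV, plugC]
      rw [renPlugC X d M k _ hg]
  | .snd M => by
      intro k g hg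
      simp only [renV, renC, plugV, plugC]
      rw [renPlugC X d M k _ hg]
  | .abortC V => by
      intro k g hg
      simp only [renV, renC, plugV, plugC]
      rw [renPlugV X d V k _ hg]
  | .caseC V M₁ M₂ => by
      intro k g hg
      simp only [renV, renC, plugV, plugC]
      rw [show k + d + 1 = (k + 1) + d from by omega]
      rw [renPlugV X d V k _ hg, renPlugC X d M₁ (k + 1) _ (liftIf hg), renPlugC X d M₂ (k + 1) _ (liftIf hg)]
  | .splitPC V M => by
      intro k g hg
      simp only [renV, renC, plugV, plugC]
      rw [show k + d + 2 = (k + 2) + d from by omega]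
      rw [renPlugV X d V k _ hg, renPlugC X d M (k + 2) _ (liftIf (liftIf hg))]
  | .splitUC V M => by
      intro k g hg
      simp only [renV, renC, plugV, plugC]
      rw [renPlugV X d V k _ hg, renPlugC X d M k _ hg]
  | .unrollPC V M => by
      intro k g hg
      simp only [renV, renC, plugV, plugC]
      rw [show k + d + 1 = (k + 1) + d from by omega]
      rw [renPlugV X d V k _ hg, renPlugC X d M (k + 1) _ (liftIf hg)]
  | .rollC T M => by
      intro k g hg
      simp only [renV, renC, plugV, plugC]
      rw [renPlugC X d M k _ hg]
  | .unrollC M => by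
      intro k g hg
      simp only [renV, renC, plugV, plugC]
      rw [renPlugC X d M k _ hg]
end

mutual
theorem plugPlugV (X Y : Comp) :
    ∀ (W : Val) (d : Nat), plugV X d (plugV Y d W) = plugV (plugC X 0 Y) d W
  | .var n => by intro d; simp [plugV, plugC]
  | .up A A' V => by intro d; simp only [plugV, plugC]; rw [plugPlugV X Y V d]
  | .unit => by intro d; simp [plugV, plugC]
  | .inl V => by intro d; simp only [plugV, plugC]; rw [plugPlugV X Y V d]
  | .inr V => by intro d; simp only [plugV, plugC]; rw [plugPlugV X Y V d]
  | .pair V W => by intro d; simp only [plugV, plugC]; rw [plugPlugV X Y V d, plugPlugV X Y W d]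
  | .abortV V => by intro d; simp only [plugV, plugC]; rw [plugPlugV X Y V d]
  | .caseV V W₁ W₂ => by intro d; simp only [plugV, plugC]; rw [plugPlugV X Y V d, plugPlugV X Y W₁ (d + 1), plugPlugV X Y W₂ (d + 1)]
  | .splitPV V W => by intro d; simp only [plugV, plugC]; rw [plugPlugV X Y V d, plugPlugV X Y W (d + 2)]
  | .splitUV V W => by intro d; simp only [plugV, plugC]; rw [plugPlugV X Y V d, plugPlugV X Y W d]
  | .rollV T V => by intro d; simp only [plugV, plugC]; rw [plugPlugV X Y V d]
  | .unrollPV V W => by intro d; simp only [plugV, plugC]; rw [plugPlugV X Y V d, plugPlugV X Y W (d + 1)]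
  | .thunk M => by intro d; simp only [plugV, plugC]; rw [plugPlugC X Y M d]
theorem plugPlugC (X Y : Comp) :
    ∀ (S : Comp) (d : Nat), plugC X d (plugC Y d S) = plugC (plugC X 0 Y) d S
  | .hole => by
      intro d
      simp only [plugC]
      have := renPlugC X d Y 0 (fun n => n + d) (by intro n; simp)
      rw [Nat.zero_add] at this
      exact this
  | .err => by intro d; simp [plugV, plugC]
  | .dn B B' M => by intro d; simp only [plugV, plugC]; rw [plugPlugC X Y M d]
  | .force V => by intro d; simp only [plugV, plugC]; rw [plugPlugV X Y V d]
  | .ret V => by intro d; simp only [plugV, plugC]; rw [plugPlugV X Y V d]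
  | .bind M N => by intro d; simp only [plugV, plugC]; rw [plugPlugC X Y M d, plugPlugC X Y N (d + 1)]
  | .lam M => by intro d; simp only [plugV, plugC]; rw [plugPlugC X Y M (d + 1)]
  | .app M V => by intro d; simp only [plugV, plugC]; rw [plugPlugC X Y M d, plugPlugV X Y V d]
  | .unitC => by intro d; simp [plugV, plugC]
  | .pairC M N => by intro d; simp only [plugV, plugC]; rw [plugPlugC X Y M d, plugPlugC X Y N d]
  | .fst M => by intro d; simp only [plugV, plugC]; rw [plugPlugC X Y M d]
  | .snd M => by intro d; simp only [plugV, plugC]; rw [plugPlugC X Y M d]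
  | .abortC V => by intro d; simp only [plugV, plugC]; rw [plugPlugV X Y V d]
  | .caseC V M₁ M₂ => by intro d; simp only [plugV, plugC]; rw [plugPlugV X Y V d, plugPlugC X Y M₁ (d + 1), plugPlugC X Y M₂ (d + 1)]
  | .splitPC V M => by intro d; simp only [plugV, plugC]; rw [plugPlugV X Y V d, plugPlugC X Y M (d + 2)]
  | .splitUC V M => by intro d; simp only [plugV, plugC]; rw [plugPlugV X Y V d, plugPlugC X Y M d]
  | .unrollPC V M => by intro d; simp only [plugV, plugC]; rw [plugPlugV X Y V d, plugPlugC X Y M (d + 1)]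
  | .rollC T M => by intro d; simp only [plugV, plugC]; rw [plugPlugC X Y M d]
  | .unrollC M => by intro d; simp only [plugV, plugC]; rw [plugPlugC X Y M d]
end

theorem liftSubIf {σ τ : Nat → Val} {d : Nat}
    (hτ : ∀ n, τ n = if n < d then .var n else renV (· + d) (σ (n - d))) :
    ∀ n, liftSub τ n = if n < d + 1 then .var n else renV (· + (d + 1)) (σ (n - (d + 1))) := by
  intro n
  cases n with
  | zero => simp [liftSub]
  | succ n =>
      simp only [liftSub, hτ]
      by_cases hnd : n < d
      · simp [hnd, Nat.succ_lt_succ_iff, renV]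
      · rw [if_neg hnd, if_neg (by omega : ¬ n + 1 < d + 1), Nat.succ_sub_succ,
            ren_ren_V Nat.succ (· + d) (· + (d + 1)) (fun m => rfl)]

theorem liftSubPlug {τ : Nat → Val}
    (hP : ∀ n g d' Y, plugV Y d' (renV g (τ n)) = renV g (τ n)) :
    ∀ n g d' Y, plugV Y d' (renV g (liftSub τ n)) = renV g (liftSub τ n) := by
  intro n g d' Y
  cases n with
  | zero => simp [liftSub, renV, plugV]
  | succ n =>
      simp only [liftSub]
      rw [ren_ren_V g Nat.succ (fun m => g (m + 1)) (fun m => rfl) (τ n)]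
      exact hP n _ d' Y

mutual
theorem subPlugV (X : Comp) (σ : Nat → Val) :
    ∀ (W : Val) (d : Nat) (τ : Nat → Val),
    (∀ n, τ n = if n < d then .var n else renV (· + d) (σ (n - d))) →
    (∀ n g d' Y, plugV Y d' (renV g (τ n)) = renV g (τ n)) →
    subV τ (plugV X d W) = plugV (subC σ X) d (subV τ W)
  | .var n => by
      intro d τ hτ hP
      simp only [plugV, subV]
      rw [← ren_id_V (fun x => x) (fun _ => rfl) (τ n)]
      exact (hP n _ d _).symm
  | .up A A' V => by intro d τ hτ hP; simp only [plugV, plugC, subV, subC]; rw [subPlugV X σ V d _ hτ hP]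
  | .unit => by intro d τ hτ hP; simp [plugV, plugC, subV, subC]
  | .inl V => by intro d τ hτ hP; simp only [plugV, plugC, subV, subC]; rw [subPlugV X σ V d _ hτ hP]
  | .inr V => by intro d τ hτ hP; simp only [plugV, plugC, subV, subC]; rw [subPlugV X σ V d _ hτ hP]
  | .pair V W => by intro d τ hτ hP; simp only [plugV, plugC, subV, subC]; rw [subPlugV X σ V d _ hτ hP, subPlugV X σ W d _ hτ hP]
  | .abortV V => by intro d τ hτ hP; simp only [plugV, plugC, subV, subC]; rw [subPlugV X σ V d _ hτ hP]
  | .caseV V W₁ W₂ => by intro d τ hτ hP; simp only [plugV, plugC, subV, subC]; rw [subPlugV X σ V d _ hτ hP, subPlugV X σ W₁ (d + 1) _ (liftSubIf hτ) (liftSubPlug hP), subPlugV X σ W₂ (d + 1) _ (liftSubIf hτ) (liftSubPlug hP)]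
  | .splitPV V W => by intro d τ hτ hP; simp only [plugV, plugC, subV, subC]; rw [subPlugV X σ V d _ hτ hP, subPlugV X σ W (d + 2) _ (liftSubIf (liftSubIf hτ)) (liftSubPlug (liftSubPlug hP))]
  | .splitUV V W => by intro d τ hτ hP; simp only [plugV, plugC, subV, subC]; rw [subPlugV X σ V d _ hτ hP, subPlugV X σ W d _ hτ hP]
  | .rollV T V => by intro d τ hτ hP; simp only [plugV, plugC, subV, subC]; rw [subPlugV X σ V d _ hτ hP]
  | .unrollPV V W => by intro d τ hτ hP; simp only [plugV, plugC, subV, subC]; rw [subPlugV X σ V d _ hτ hP, subPlugV X σ W (d + 1) _ (liftSubIf hτ) (liftSubPlug hP)]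
  | .thunk M => by intro d τ hτ hP; simp only [plugV, plugC, subV, subC]; rw [subPlugC X σ M d _ hτ hP]
theorem subPlugC (X : Comp) (σ : Nat → Val) :
    ∀ (S : Comp) (d : Nat) (τ : Nat → Val),
    (∀ n, τ n = if n < d then .var n else renV (· + d) (σ (n - d))) →
    (∀ n g d' Y, plugV Y d' (renV g (τ n)) = renV g (τ n)) →
    subC τ (plugC X d S) = plugC (subC σ X) d (subC τ S)
  | .hole => by
      intro d τ hτ hP
      simp only [plugC, subC]
      rw [sub_ren_C (σ := τ) (τ := fun n => renV (· + d) (σ n)) (f := (· + d))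
        (by intro n; rw [hτ]; simp [Nat.not_lt.mpr (Nat.le_add_left d n)]) X]
      rw [ren_sub_C (σ := σ) (τ := fun n => renV (· + d) (σ n)) (f := (· + d)) (fun n => rfl) X]
  | .err => by intro d τ hτ hP; simp [plugV, plugC, subV, subC]
  | .dn B B' M => by intro d τ hτ hP; simp only [plugV, plugC, subV, subC]; rw [subPlugC X σ M d _ hτ hP]
  | .force V => by intro d τ hτ hP; simp only [plugV, plugC, subV, subC]; rw [subPlugV X σ V d _ hτ hP]
  | .ret V => by intro d τ hτ hP; simp only [plugV, plugC, subV, subC]; rw [subPlugV X σ V d _ hτ hP]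
  | .bind M N => by intro d τ hτ hP; simp only [plugV, plugC, subV, subC]; rw [subPlugC X σ M d _ hτ hP, subPlugC X σ N (d + 1) _ (liftSubIf hτ) (liftSubPlug hP)]
  | .lam M => by intro d τ hτ hP; simp only [plugV, plugC, subV, subC]; rw [subPlugC X σ M (d + 1) _ (liftSubIf hτ) (liftSubPlug hP)]
  | .app M V => by intro d τ hτ hP; simp only [plugV, plugC, subV, subC]; rw [subPlugC X σ M d _ hτ hP, subPlugV X σ V d _ hτ hP]
  | .unitC => by intro d τ hτ hP; simp [plugV, plugC, subV, subC]
  | .pairC M N => by intro d τ hτ hP; simp only [plugV, plugC, subV, subC]; rw [subPlugC X σ M d _ hτ hP, subPlugC X σ N d _ hτ hP]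
  | .fst M => by intro d τ hτ hP; simp only [plugV, plugC, subV, subC]; rw [subPlugC X σ M d _ hτ hP]
  | .snd M => by intro d τ hτ hP; simp only [plugV, plugC, subV, subC]; rw [subPlugC X σ M d _ hτ hP]
  | .abortC V => by intro d τ hτ hP; simp only [plugV, plugC, subV, subC]; rw [subPlugV X σ V d _ hτ hP]
  | .caseC V M₁ M₂ => by intro d τ hτ hP; simp only [plugV, plugC, subV, subC]; rw [subPlugV X σ V d _ hτ hP, subPlugC X σ M₁ (d + 1) _ (liftSubIf hτ) (liftSubPlug hP), subPlugC X σ M₂ (d + 1) _ (liftSubIf hτ) (liftSubPlug hP)]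
  | .splitPC V M => by intro d τ hτ hP; simp only [plugV, plugC, subV, subC]; rw [subPlugV X σ V d _ hτ hP, subPlugC X σ M (d + 2) _ (liftSubIf (liftSubIf hτ)) (liftSubPlug (liftSubPlug hP))]
  | .splitUC V M => by intro d τ hτ hP; simp only [plugV, plugC, subV, subC]; rw [subPlugV X σ V d _ hτ hP, subPlugC X σ M d _ hτ hP]
  | .unrollPC V M => by intro d τ hτ hP; simp only [plugV, plugC, subV, subC]; rw [subPlugV X σ V d _ hτ hP, subPlugC X σ M (d + 1) _ (liftSubIf hτ) (liftSubPlug hP)]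
  | .rollC T M => by intro d τ hτ hP; simp only [plugV, plugC, subV, subC]; rw [subPlugC X σ M d _ hτ hP]
  | .unrollC M => by intro d τ hτ hP; simp only [plugV, plugC, subV, subC]; rw [subPlugC X σ M d _ hτ hP]
end

theorem subPlug0C (X S : Comp) (σ : Nat → Val)
    (hP : ∀ n g d' Y, plugV Y d' (renV g (σ n)) = renV g (σ n)) :
    subC σ (plugC X 0 S) = plugC (subC σ X) 0 (subC σ S) := by
  refine subPlugC X σ S 0 σ ?_ hP
  intro n
  simp only [Nat.not_lt_zero, if_false, Nat.sub_zero]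
  exact (ren_id_V (· + 0) (fun m => rfl) (σ n)).symm

mutual
theorem renNoHoleV {P Γ V A} (h : VTyping P Γ V A) :
    ∀ (g : Nat → Nat) (d : Nat) (Y : Comp), plugV Y d (renV g V) = renV g V := by
  match h with
  | .var hg => intro g d Y; rfl
  | .up hu h => intro g d Y; simp only [renV, plugV]; rw [renNoHoleV h]
  | .unit => intro g d Y; rfl
  | .inl h => intro g d Y; simp only [renV, plugV]; rw [renNoHoleV h]
  | .inr h => intro g d Y; simp only [renV, plugV]; rw [renNoHoleV h]
  | .pair h1 h2 => intro g d Y; simp only [renV, plugV]; rw [renNoHoleV h1, renNoHoleV h2]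
  | .abortV hcx h => intro g d Y; simp only [renV, plugV]; rw [renNoHoleV h]
  | .caseV hcx h h1 h2 => intro g d Y; simp only [renV, plugV]; rw [renNoHoleV h, renNoHoleV h1, renNoHoleV h2]
  | .splitPV hcx h h1 => intro g d Y; simp only [renV, plugV]; rw [renNoHoleV h, renNoHoleV h1]
  | .splitUV hcx h h1 => intro g d Y; simp only [renV, plugV]; rw [renNoHoleV h, renNoHoleV h1]
  | .rollV hr h => intro g d Y; simp only [renV, plugV]; rw [renNoHoleV h]
  | .unrollPV hcx hr h h1 => intro g d Y; simp only [renV, plugV]; rw [renNoHoleV h, renNoHoleV h1]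
  | .thunk h => intro g d Y; simp only [renV, plugV]; rw [renNoHoleC h rfl]
theorem renNoHoleC {P Γ Δ M B} (h : CTyping P Γ Δ M B) (hΔ : Δ = none) :
    ∀ (g : Nat → Nat) (d : Nat) (Y : Comp), plugC Y d (renC g M) = renC g M := by
  match h with
  | .hole => exact absurd hΔ (by simp)
  | .err => intro g d Y; rfl
  | .dn hd h => intro g d Y; simp only [renC, plugC]; rw [renNoHoleC h hΔ]
  | .force h => intro g d Y; simp only [renC, plugC]; rw [renNoHoleV h]
  | .ret h => intro g d Y; simp only [renC, plugC]; rw [renNoHoleV h]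
  | .bind h h1 => intro g d Y; simp only [renC, plugC]; rw [renNoHoleC h hΔ, renNoHoleC h1 rfl]
  | .lam hs h => intro g d Y; simp only [renC, plugC]; rw [renNoHoleC h hΔ]
  | .app h hv => intro g d Y; simp only [renC, plugC]; rw [renNoHoleC h hΔ, renNoHoleV hv]
  | .unitC hs => intro g d Y; rfl
  | .pairC hs h1 h2 => intro g d Y; simp only [renC, plugC]; rw [renNoHoleC h1 hΔ, renNoHoleC h2 hΔ]
  | .fst h => intro g d Y; simp only [renC, plugC]; rw [renNoHoleC h hΔ]
  | .snd h => intro g d Y; simp only [renC, plugC]; rw [renNoHoleC h hΔ]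
  | .abortC hs hv => intro g d Y; simp only [renC, plugC]; rw [renNoHoleV hv]
  | .caseC hs hv h1 h2 => intro g d Y; simp only [renC, plugC]; rw [renNoHoleV hv, renNoHoleC h1 hΔ, renNoHoleC h2 hΔ]
  | .splitPC hs hv h1 => intro g d Y; simp only [renC, plugC]; rw [renNoHoleV hv, renNoHoleC h1 hΔ]
  | .splitUC hs hv h1 => intro g d Y; simp only [renC, plugC]; rw [renNoHoleV hv, renNoHoleC h1 hΔ]
  | .unrollPC hs hr hv h1 => intro g d Y; simp only [renC, plugC]; rw [renNoHoleV hv, renNoHoleC h1 hΔ]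
  | .rollC hr h => intro g d Y; simp only [renC, plugC]; rw [renNoHoleC h hΔ]
  | .unrollC hr h => intro g d Y; simp only [renC, plugC]; rw [renNoHoleC h hΔ]
end

theorem sub0Plug {P Γ V A} (h : VTyping P Γ V A) :
    ∀ n g d' Y, plugV Y d' (renV g (sub0 V n)) = renV g (sub0 V n) := by
  intro n g d' Y
  cases n with
  | zero => exact renNoHoleV h g d' Y
  | succ n => rfl

def stoupSubst (Δ : Option CTy) : Option CTy → Option CTy
| none => none
| some _ => Δ

theorem getAppendR {Γ : Ctx} (Ξ : Ctx) :
    ∀ n B, Γ[n]? = some B → (Ξ ++ Γ)[(n + Ξ.length)]? = some B := by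
  intro n B h
  rw [List.getElem?_append_right (by omega)]
  simpa [Nat.add_sub_cancel] using h

mutual
theorem plugTyV {P Γ₀ W A} (h : VTyping P Γ₀ W A) (hcx : P.cx)
    {Γ Δ M B} (hM : CTyping P Γ Δ M B) :
    ∀ Ξ : Ctx, Γ₀ = Ξ ++ Γ → VTyping P Γ₀ (plugV M Ξ.length W) A := by
  match h with
  | .var hg => intro Ξ hΓ; exact .var hg
  | .up hu h => intro Ξ hΓ; exact .up hu (plugTyV h hcx hM Ξ hΓ)
  | .unit => intro Ξ hΓ; exact .unit
  | .inl h => intro Ξ hΓ; exact .inl (plugTyV h hcx hM Ξ hΓ)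
  | .inr h => intro Ξ hΓ; exact .inr (plugTyV h hcx hM Ξ hΓ)
  | .pair h1 h2 => intro Ξ hΓ; exact .pair (plugTyV h1 hcx hM Ξ hΓ) (plugTyV h2 hcx hM Ξ hΓ)
  | .abortV hc h => intro Ξ hΓ; exact .abortV hc (plugTyV h hcx hM Ξ hΓ)
  | .caseV (A₁ := A₁) (A₂ := A₂) hc h h1 h2 =>
      intro Ξ hΓ; subst hΓ
      exact .caseV hc (plugTyV h hcx hM Ξ rfl) (plugTyV h1 hcx hM (A₁::Ξ) rfl)
        (plugTyV h2 hcx hM (A₂::Ξ) rfl)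
  | .splitPV (A₁ := A₁) (A₂ := A₂) hc h h1 =>
      intro Ξ hΓ; subst hΓ
      exact .splitPV hc (plugTyV h hcx hM Ξ rfl) (plugTyV h1 hcx hM (A₂::A₁::Ξ) rfl)
  | .splitUV hc h h1 => intro Ξ hΓ; exact .splitUV hc (plugTyV h hcx hM Ξ hΓ) (plugTyV h1 hcx hM Ξ hΓ)
  | .rollV hr h => intro Ξ hΓ; exact .rollV hr (plugTyV h hcx hM Ξ hΓ)
  | .unrollPV (A := A₀) hc hr h h1 =>
      intro Ξ hΓ; subst hΓ
      exact .unrollPV hc hr (plugTyV h hcx hM Ξ rfl) (plugTyV h1 hcx hM ((muUnfold A₀)::Ξ) rfl)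
  | .thunk h => intro Ξ hΓ; exact .thunk (plugTyC h hcx hM Ξ hΓ (Or.inr rfl))
theorem plugTyC {P Γ₀ Δ₀ S B'} (h : CTyping P Γ₀ Δ₀ S B') (hcx : P.cx)
    {Γ Δ M B} (hM : CTyping P Γ Δ M B) :
    ∀ Ξ : Ctx, Γ₀ = Ξ ++ Γ → (Δ₀ = some B ∨ Δ₀ = none) →
    CTyping P Γ₀ (stoupSubst Δ Δ₀) (plugC M Ξ.length S) B' := by
  match h with
  | .hole =>
      intro Ξ hΓ hinv; subst hΓ
      rcases hinv with h' | h'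
      · cases h'
        exact renTyC hM (getAppendR Ξ)
      · exact absurd h' (by simp)
  | .err => intro Ξ hΓ hinv; exact .err
  | .dn hd h => intro Ξ hΓ hinv; exact .dn hd (plugTyC h hcx hM Ξ hΓ hinv)
  | .force h => intro Ξ hΓ hinv; exact .force (plugTyV h hcx hM Ξ hΓ)
  | .ret h => intro Ξ hΓ hinv; exact .ret (plugTyV h hcx hM Ξ hΓ)
  | .bind (A := A₀) h h1 =>
      intro Ξ hΓ hinv; subst hΓ
      exact .bind (plugTyC h hcx hM Ξ rfl hinv) (plugTyC h1 hcx hM (A₀::Ξ) rfl (Or.inr rfl))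
  | .lam (A := A₀) hs h =>
      intro Ξ hΓ hinv; subst hΓ
      exact .lam (Or.inr hcx) (plugTyC h hcx hM (A₀::Ξ) rfl hinv)
  | .app h hv => intro Ξ hΓ hinv; exact .app (plugTyC h hcx hM Ξ hΓ hinv) (plugTyV hv hcx hM Ξ hΓ)
  | .unitC hs => intro Ξ hΓ hinv; exact .unitC (Or.inr hcx)
  | .pairC hs h1 h2 =>
      intro Ξ hΓ hinv
      exact .pairC (Or.inr hcx) (plugTyC h1 hcx hM Ξ hΓ hinv) (plugTyC h2 hcx hM Ξ hΓ hinv)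
  | .fst h => intro Ξ hΓ hinv; exact .fst (plugTyC h hcx hM Ξ hΓ hinv)
  | .snd h => intro Ξ hΓ hinv; exact .snd (plugTyC h hcx hM Ξ hΓ hinv)
  | .abortC hs hv => intro Ξ hΓ hinv; exact .abortC (Or.inr hcx) (plugTyV hv hcx hM Ξ hΓ)
  | .caseC (A₁ := A₁) (A₂ := A₂) hs hv h1 h2 =>
      intro Ξ hΓ hinv; subst hΓ
      exact .caseC (Or.inr hcx) (plugTyV hv hcx hM Ξ rfl)
        (plugTyC h1 hcx hM (A₁::Ξ) rfl hinv) (plugTyC h2 hcx hM (A₂::Ξ) rfl hinv)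
  | .splitPC (A₁ := A₁) (A₂ := A₂) hs hv h1 =>
      intro Ξ hΓ hinv; subst hΓ
      exact .splitPC (Or.inr hcx) (plugTyV hv hcx hM Ξ rfl)
        (plugTyC h1 hcx hM (A₂::A₁::Ξ) rfl hinv)
  | .splitUC hs hv h1 =>
      intro Ξ hΓ hinv
      exact .splitUC (Or.inr hcx) (plugTyV hv hcx hM Ξ hΓ) (plugTyC h1 hcx hM Ξ hΓ hinv)
  | .unrollPC (A := A₀) hs hr hv h1 =>
      intro Ξ hΓ hinv; subst hΓ
      exact .unrollPC (Or.inr hcx) hr (plugTyV hv hcx hM Ξ rfl)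
        (plugTyC h1 hcx hM ((muUnfold A₀)::Ξ) rfl hinv)
  | .rollC hr h => intro Ξ hΓ hinv; exact .rollC hr (plugTyC h hcx hM Ξ hΓ hinv)
  | .unrollC hr h => intro Ξ hΓ hinv; exact .unrollC hr (plugTyC h hcx hM Ξ hΓ hinv)
end

/-- Typing of a plugged stack at the outermost level. -/
theorem plugTy {P : Policy} {Γ : Ctx} {Δ : Option CTy} {S M : Comp} {B B' : CTy}
    (hS : CTyping P [] (some B) S B') (hcx : P.cx) (hM : CTyping P Γ Δ M B) :
    CTyping P Γ Δ (plug S M) B' := by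
  have := plugTyC (wkC hS Γ) hcx hM [] rfl (Or.inl rfl)
  simpa [plug, stoupSubst] using this
theorem ctxDynAppend {Γ Γ' : Ctx} (h : CtxDyn Γ Γ') (Ξ : Ctx) : CtxDyn (Γ ++ Ξ) (Γ' ++ Ξ) := by
  induction h with
  | nil => exact ctxDyn_refl Ξ
  | cons h _ ih => exact List.Forall₂.cons h ih

theorem wkVLeS {Γ Γ' V V' A A'} (h : VLe cbpvStarP Γ Γ' V V' A A') (Ξ : Ctx) :
    VLe cbpvStarP (Γ ++ Ξ) (Γ' ++ Ξ) V V' A A' :=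
  VLe.rec (motive_1 := fun Γ Γ' V V' A A' _ => ∀ Ξ : Ctx, VLe cbpvStarP (Γ ++ Ξ) (Γ' ++ Ξ) V V' A A')
    (motive_2 := fun Γ Γ' Δ Δ' M M' B B' _ => ∀ Ξ : Ctx, CLe cbpvStarP (Γ ++ Ξ) (Γ' ++ Ξ) Δ Δ' M M' B B')
    (fun ht Ξ => .refl (wkV ht Ξ))
    (fun _ _ ih1 ih2 Ξ => .trans (ih1 Ξ) (ih2 Ξ))
    (fun hd hg hg' Ξ => .var (ctxDynAppend hd Ξ) (getAppend Ξ _ _ hg) (getAppend Ξ _ _ hg'))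
    (fun _ _ ih1 ih2 Ξ => .substVV (ih1 Ξ) (ih2 Ξ))
    (fun _ hd ih Ξ => .inlCong (ih Ξ) hd)
    (fun hd _ ih Ξ => .inrCong hd (ih Ξ))
    (fun hd Ξ => .unitCong (ctxDynAppend hd Ξ))
    (fun _ _ ih1 ih2 Ξ => .pairCong (ih1 Ξ) (ih2 Ξ))
    (fun _ ih Ξ => .thunkCong (ih Ξ))
    (fun hcx hd _ ih Ξ => .abortVCong hcx hd (ih Ξ))
    (fun hcx _ _ _ ih ih1 ih2 Ξ => .caseVCong hcx (ih Ξ) (ih1 Ξ) (ih2 Ξ))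
    (fun hcx _ _ ih ih1 Ξ => .splitPVCong hcx (ih Ξ) (ih1 Ξ))
    (fun hcx _ _ ih ih1 Ξ => .splitUVCong hcx (ih Ξ) (ih1 Ξ))
    (fun hr _ ih Ξ => .rollVCong hr (ih Ξ))
    (fun hcx hr _ _ ih ih1 Ξ => .unrollPVCong hcx hr (ih Ξ) (ih1 Ξ))
    (fun hu _ => absurd hu (fun h => h))
    (fun hu _ => absurd hu (fun h => h))
    (fun hcx hV h1 h2 Ξ => .sumVBetaL hcx (wkV hV Ξ) (wkV h1 Ξ) (wkV h2 Ξ))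
    (fun hcx hV h1 h2 Ξ => .sumVBetaL' hcx (wkV hV Ξ) (wkV h1 Ξ) (wkV h2 Ξ))
    (fun hcx hV h1 h2 Ξ => .sumVBetaR hcx (wkV hV Ξ) (wkV h1 Ξ) (wkV h2 Ξ))
    (fun hcx hV h1 h2 Ξ => .sumVBetaR' hcx (wkV hV Ξ) (wkV h1 Ξ) (wkV h2 Ξ))
    (fun hcx hW Ξ => .sumVEta hcx (wkV hW Ξ))
    (fun hcx hW Ξ => .sumVEta' hcx (wkV hW Ξ))
    (fun hcx hW Ξ => .zeroVEta hcx (wkV hW Ξ))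
    (fun hcx hW Ξ => .zeroVEta' hcx (wkV hW Ξ))
    (fun hcx h1 h2 hW Ξ => .prodVBeta hcx (wkV h1 Ξ) (wkV h2 Ξ) (wkV hW Ξ))
    (fun hcx h1 h2 hW Ξ => .prodVBeta' hcx (wkV h1 Ξ) (wkV h2 Ξ) (wkV hW Ξ))
    (fun hcx hW Ξ => .prodVEta hcx (wkV hW Ξ))
    (fun hcx hW Ξ => .prodVEta' hcx (wkV hW Ξ))
    (fun hcx hW Ξ => .oneVBeta hcx (wkV hW Ξ))
    (fun hcx hW Ξ => .oneVBeta' hcx (wkV hW Ξ))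
    (fun hcx hW Ξ => .oneVEta hcx (wkV hW Ξ))
    (fun hcx hW Ξ => .oneVEta' hcx (wkV hW Ξ))
    (fun hcx hr hV hW Ξ => .muVBeta hcx hr (wkV hV Ξ) (wkV hW Ξ))
    (fun hcx hr hV hW Ξ => .muVBeta' hcx hr (wkV hV Ξ) (wkV hW Ξ))
    (fun hcx hr hW Ξ => .muVEta hcx hr (wkV hW Ξ))
    (fun hcx hr hW Ξ => .muVEta' hcx hr (wkV hW Ξ))
    (fun hV Ξ => .uEta (wkV hV Ξ))
    (fun hV Ξ => .uEta' (wkV hV Ξ))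
    (fun ht Ξ => .refl (wkC ht Ξ))
    (fun _ _ ih1 ih2 Ξ => .trans (ih1 Ξ) (ih2 Ξ))
    (fun hd hc Ξ => .hole (ctxDynAppend hd Ξ) hc)
    (fun _ _ ih1 ih2 Ξ => .substVC (ih1 Ξ) (ih2 Ξ))
    (fun _ _ ih1 ih2 Ξ => .plugCong (ih1 Ξ) (ih2 Ξ))
    (fun hd hc hM Ξ => .errBot (ctxDynAppend hd Ξ) hc (wkC hM Ξ))
    (fun hS Ξ => .errStrict (wkC hS Ξ))
    (fun _ ih Ξ => .forceCong (ih Ξ))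
    (fun _ ih Ξ => .retCong (ih Ξ))
    (fun _ _ ih1 ih2 Ξ => .bindCong (ih1 Ξ) (ih2 Ξ))
    (fun hs hd _ ih Ξ => .lamCong hs hd (ih Ξ))
    (fun _ _ ih1 ih2 Ξ => .appCong (ih1 Ξ) (ih2 Ξ))
    (fun hs hd hsd Ξ => .unitCCong hs (ctxDynAppend hd Ξ) hsd)
    (fun hs _ _ ih1 ih2 Ξ => .pairCCong hs (ih1 Ξ) (ih2 Ξ))
    (fun _ ih Ξ => .fstCong (ih Ξ))
    (fun _ ih Ξ => .sndCong (ih Ξ))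
    (fun hs hsd hc _ ih Ξ => .abortCCong hs hsd hc (ih Ξ))
    (fun hs _ _ _ ih ih1 ih2 Ξ => .caseCCong hs (ih Ξ) (ih1 Ξ) (ih2 Ξ))
    (fun hs _ _ ih ih1 Ξ => .splitPCCong hs (ih Ξ) (ih1 Ξ))
    (fun hs _ _ ih ih1 Ξ => .splitUCCong hs (ih Ξ) (ih1 Ξ))
    (fun hs hr _ _ ih ih1 Ξ => .unrollPCCong hs hr (ih Ξ) (ih1 Ξ))
    (fun hr _ ih Ξ => .rollCCong hr (ih Ξ))
    (fun hr _ ih Ξ => .unrollCCong hr (ih Ξ))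
    (fun hd _ => absurd hd (fun h => h))
    (fun hd _ => absurd hd (fun h => h))
    (fun hu _ _ => absurd hu (fun h => h))
    (fun hu _ _ => absurd hu (fun h => h))
    (fun hs hV h1 h2 Ξ => .sumCBetaL hs (wkV hV Ξ) (wkC h1 Ξ) (wkC h2 Ξ))
    (fun hs hV h1 h2 Ξ => .sumCBetaL' hs (wkV hV Ξ) (wkC h1 Ξ) (wkC h2 Ξ))
    (fun hs hV h1 h2 Ξ => .sumCBetaR hs (wkV hV Ξ) (wkC h1 Ξ) (wkC h2 Ξ))
    (fun hs hV h1 h2 Ξ => .sumCBetaR' hs (wkV hV Ξ) (wkC h1 Ξ) (wkC h2 Ξ))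
    (fun hs hM Ξ => .sumCEta hs (wkC hM Ξ))
    (fun hs hM Ξ => .sumCEta' hs (wkC hM Ξ))
    (fun hs hM Ξ => .zeroCEta hs (wkC hM Ξ))
    (fun hs hM Ξ => .zeroCEta' hs (wkC hM Ξ))
    (fun hs h1 h2 hM Ξ => .prodCBeta hs (wkV h1 Ξ) (wkV h2 Ξ) (wkC hM Ξ))
    (fun hs h1 h2 hM Ξ => .prodCBeta' hs (wkV h1 Ξ) (wkV h2 Ξ) (wkC hM Ξ))
    (fun hs hM Ξ => .prodCEta hs (wkC hM Ξ))
    (fun hs hM Ξ => .prodCEta' hs (wkC hM Ξ))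
    (fun hs hM Ξ => .oneCBeta hs (wkC hM Ξ))
    (fun hs hM Ξ => .oneCBeta' hs (wkC hM Ξ))
    (fun hs hM Ξ => .oneCEta hs (wkC hM Ξ))
    (fun hs hM Ξ => .oneCEta' hs (wkC hM Ξ))
    (fun hs hr hV hM Ξ => .muCBeta hs hr (wkV hV Ξ) (wkC hM Ξ))
    (fun hs hr hV hM Ξ => .muCBeta' hs hr (wkV hV Ξ) (wkC hM Ξ))
    (fun hs hr hM Ξ => .muCEta hs hr (wkC hM Ξ))
    (fun hs hr hM Ξ => .muCEta' hs hr (wkC hM Ξ))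
    (fun hM Ξ => .uBeta (wkC hM Ξ))
    (fun hM Ξ => .uBeta' (wkC hM Ξ))
    (fun hV hN Ξ => .fBeta (wkV hV Ξ) (wkC hN Ξ))
    (fun hV hN Ξ => .fBeta' (wkV hV Ξ) (wkC hN Ξ))
    (fun hM Ξ => .fEta (wkC hM Ξ))
    (fun hM Ξ => .fEta' (wkC hM Ξ))
    (fun hs hM hV Ξ => .arrBeta hs (wkC hM Ξ) (wkV hV Ξ))
    (fun hs hM hV Ξ => .arrBeta' hs (wkC hM Ξ) (wkV hV Ξ))
    (fun hs hM Ξ => .arrEta hs (wkC hM Ξ))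
    (fun hs hM Ξ => .arrEta' hs (wkC hM Ξ))
    (fun hs h1 h2 Ξ => .wthBeta1 hs (wkC h1 Ξ) (wkC h2 Ξ))
    (fun hs h1 h2 Ξ => .wthBeta1' hs (wkC h1 Ξ) (wkC h2 Ξ))
    (fun hs h1 h2 Ξ => .wthBeta2 hs (wkC h1 Ξ) (wkC h2 Ξ))
    (fun hs h1 h2 Ξ => .wthBeta2' hs (wkC h1 Ξ) (wkC h2 Ξ))
    (fun hs hM Ξ => .wthEta hs (wkC hM Ξ))
    (fun hs hM Ξ => .wthEta' hs (wkC hM Ξ))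
    (fun hs hM Ξ => .topEta hs (wkC hM Ξ))
    (fun hs hM Ξ => .topEta' hs (wkC hM Ξ))
    (fun hr hM Ξ => .nuBeta hr (wkC hM Ξ))
    (fun hr hM Ξ => .nuBeta' hr (wkC hM Ξ))
    (fun hr hM Ξ => .nuEta hr (wkC hM Ξ))
    (fun hr hM Ξ => .nuEta' hr (wkC hM Ξ))
    h Ξ

theorem wkCLeS {Γ Γ' Δ Δ' M M' B B'} (h : CLe cbpvStarP Γ Γ' Δ Δ' M M' B B') (Ξ : Ctx) :
    CLe cbpvStarP (Γ ++ Ξ) (Γ' ++ Ξ) Δ Δ' M M' B B' :=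
  CLe.rec (motive_1 := fun Γ Γ' V V' A A' _ => ∀ Ξ : Ctx, VLe cbpvStarP (Γ ++ Ξ) (Γ' ++ Ξ) V V' A A')
    (motive_2 := fun Γ Γ' Δ Δ' M M' B B' _ => ∀ Ξ : Ctx, CLe cbpvStarP (Γ ++ Ξ) (Γ' ++ Ξ) Δ Δ' M M' B B')
    (fun ht Ξ => .refl (wkV ht Ξ))
    (fun _ _ ih1 ih2 Ξ => .trans (ih1 Ξ) (ih2 Ξ))
    (fun hd hg hg' Ξ => .var (ctxDynAppend hd Ξ) (getAppend Ξ _ _ hg) (getAppend Ξ _ _ hg'))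
    (fun _ _ ih1 ih2 Ξ => .substVV (ih1 Ξ) (ih2 Ξ))
    (fun _ hd ih Ξ => .inlCong (ih Ξ) hd)
    (fun hd _ ih Ξ => .inrCong hd (ih Ξ))
    (fun hd Ξ => .unitCong (ctxDynAppend hd Ξ))
    (fun _ _ ih1 ih2 Ξ => .pairCong (ih1 Ξ) (ih2 Ξ))
    (fun _ ih Ξ => .thunkCong (ih Ξ))
    (fun hcx hd _ ih Ξ => .abortVCong hcx hd (ih Ξ))
    (fun hcx _ _ _ ih ih1 ih2 Ξ => .caseVCong hcx (ih Ξ) (ih1 Ξ) (ih2 Ξ))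
    (fun hcx _ _ ih ih1 Ξ => .splitPVCong hcx (ih Ξ) (ih1 Ξ))
    (fun hcx _ _ ih ih1 Ξ => .splitUVCong hcx (ih Ξ) (ih1 Ξ))
    (fun hr _ ih Ξ => .rollVCong hr (ih Ξ))
    (fun hcx hr _ _ ih ih1 Ξ => .unrollPVCong hcx hr (ih Ξ) (ih1 Ξ))
    (fun hu _ => absurd hu (fun h => h))
    (fun hu _ => absurd hu (fun h => h))
    (fun hcx hV h1 h2 Ξ => .sumVBetaL hcx (wkV hV Ξ) (wkV h1 Ξ) (wkV h2 Ξ))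
    (fun hcx hV h1 h2 Ξ => .sumVBetaL' hcx (wkV hV Ξ) (wkV h1 Ξ) (wkV h2 Ξ))
    (fun hcx hV h1 h2 Ξ => .sumVBetaR hcx (wkV hV Ξ) (wkV h1 Ξ) (wkV h2 Ξ))
    (fun hcx hV h1 h2 Ξ => .sumVBetaR' hcx (wkV hV Ξ) (wkV h1 Ξ) (wkV h2 Ξ))
    (fun hcx hW Ξ => .sumVEta hcx (wkV hW Ξ))
    (fun hcx hW Ξ => .sumVEta' hcx (wkV hW Ξ))
    (fun hcx hW Ξ => .zeroVEta hcx (wkV hW Ξ))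
    (fun hcx hW Ξ => .zeroVEta' hcx (wkV hW Ξ))
    (fun hcx h1 h2 hW Ξ => .prodVBeta hcx (wkV h1 Ξ) (wkV h2 Ξ) (wkV hW Ξ))
    (fun hcx h1 h2 hW Ξ => .prodVBeta' hcx (wkV h1 Ξ) (wkV h2 Ξ) (wkV hW Ξ))
    (fun hcx hW Ξ => .prodVEta hcx (wkV hW Ξ))
    (fun hcx hW Ξ => .prodVEta' hcx (wkV hW Ξ))
    (fun hcx hW Ξ => .oneVBeta hcx (wkV hW Ξ))
    (fun hcx hW Ξ => .oneVBeta' hcx (wkV hW Ξ))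
    (fun hcx hW Ξ => .oneVEta hcx (wkV hW Ξ))
    (fun hcx hW Ξ => .oneVEta' hcx (wkV hW Ξ))
    (fun hcx hr hV hW Ξ => .muVBeta hcx hr (wkV hV Ξ) (wkV hW Ξ))
    (fun hcx hr hV hW Ξ => .muVBeta' hcx hr (wkV hV Ξ) (wkV hW Ξ))
    (fun hcx hr hW Ξ => .muVEta hcx hr (wkV hW Ξ))
    (fun hcx hr hW Ξ => .muVEta' hcx hr (wkV hW Ξ))
    (fun hV Ξ => .uEta (wkV hV Ξ))
    (fun hV Ξ => .uEta' (wkV hV Ξ))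
    (fun ht Ξ => .refl (wkC ht Ξ))
    (fun _ _ ih1 ih2 Ξ => .trans (ih1 Ξ) (ih2 Ξ))
    (fun hd hc Ξ => .hole (ctxDynAppend hd Ξ) hc)
    (fun _ _ ih1 ih2 Ξ => .substVC (ih1 Ξ) (ih2 Ξ))
    (fun _ _ ih1 ih2 Ξ => .plugCong (ih1 Ξ) (ih2 Ξ))
    (fun hd hc hM Ξ => .errBot (ctxDynAppend hd Ξ) hc (wkC hM Ξ))
    (fun hS Ξ => .errStrict (wkC hS Ξ))
    (fun _ ih Ξ => .forceCong (ih Ξ))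
    (fun _ ih Ξ => .retCong (ih Ξ))
    (fun _ _ ih1 ih2 Ξ => .bindCong (ih1 Ξ) (ih2 Ξ))
    (fun hs hd _ ih Ξ => .lamCong hs hd (ih Ξ))
    (fun _ _ ih1 ih2 Ξ => .appCong (ih1 Ξ) (ih2 Ξ))
    (fun hs hd hsd Ξ => .unitCCong hs (ctxDynAppend hd Ξ) hsd)
    (fun hs _ _ ih1 ih2 Ξ => .pairCCong hs (ih1 Ξ) (ih2 Ξ))
    (fun _ ih Ξ => .fstCong (ih Ξ))
    (fun _ ih Ξ => .sndCong (ih Ξ))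
    (fun hs hsd hc _ ih Ξ => .abortCCong hs hsd hc (ih Ξ))
    (fun hs _ _ _ ih ih1 ih2 Ξ => .caseCCong hs (ih Ξ) (ih1 Ξ) (ih2 Ξ))
    (fun hs _ _ ih ih1 Ξ => .splitPCCong hs (ih Ξ) (ih1 Ξ))
    (fun hs _ _ ih ih1 Ξ => .splitUCCong hs (ih Ξ) (ih1 Ξ))
    (fun hs hr _ _ ih ih1 Ξ => .unrollPCCong hs hr (ih Ξ) (ih1 Ξ))
    (fun hr _ ih Ξ => .rollCCong hr (ih Ξ))
    (fun hr _ ih Ξ => .unrollCCong hr (ih Ξ))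
    (fun hd _ => absurd hd (fun h => h))
    (fun hd _ => absurd hd (fun h => h))
    (fun hu _ _ => absurd hu (fun h => h))
    (fun hu _ _ => absurd hu (fun h => h))
    (fun hs hV h1 h2 Ξ => .sumCBetaL hs (wkV hV Ξ) (wkC h1 Ξ) (wkC h2 Ξ))
    (fun hs hV h1 h2 Ξ => .sumCBetaL' hs (wkV hV Ξ) (wkC h1 Ξ) (wkC h2 Ξ))
    (fun hs hV h1 h2 Ξ => .sumCBetaR hs (wkV hV Ξ) (wkC h1 Ξ) (wkC h2 Ξ))
    (fun hs hV h1 h2 Ξ => .sumCBetaR' hs (wkV hV Ξ) (wkC h1 Ξ) (wkC h2 Ξ))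
    (fun hs hM Ξ => .sumCEta hs (wkC hM Ξ))
    (fun hs hM Ξ => .sumCEta' hs (wkC hM Ξ))
    (fun hs hM Ξ => .zeroCEta hs (wkC hM Ξ))
    (fun hs hM Ξ => .zeroCEta' hs (wkC hM Ξ))
    (fun hs h1 h2 hM Ξ => .prodCBeta hs (wkV h1 Ξ) (wkV h2 Ξ) (wkC hM Ξ))
    (fun hs h1 h2 hM Ξ => .prodCBeta' hs (wkV h1 Ξ) (wkV h2 Ξ) (wkC hM Ξ))
    (fun hs hM Ξ => .prodCEta hs (wkC hM Ξ))
    (fun hs hM Ξ => .prodCEta' hs (wkC hM Ξ))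
    (fun hs hM Ξ => .oneCBeta hs (wkC hM Ξ))
    (fun hs hM Ξ => .oneCBeta' hs (wkC hM Ξ))
    (fun hs hM Ξ => .oneCEta hs (wkC hM Ξ))
    (fun hs hM Ξ => .oneCEta' hs (wkC hM Ξ))
    (fun hs hr hV hM Ξ => .muCBeta hs hr (wkV hV Ξ) (wkC hM Ξ))
    (fun hs hr hV hM Ξ => .muCBeta' hs hr (wkV hV Ξ) (wkC hM Ξ))
    (fun hs hr hM Ξ => .muCEta hs hr (wkC hM Ξ))
    (fun hs hr hM Ξ => .muCEta' hs hr (wkC hM Ξ))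
    (fun hM Ξ => .uBeta (wkC hM Ξ))
    (fun hM Ξ => .uBeta' (wkC hM Ξ))
    (fun hV hN Ξ => .fBeta (wkV hV Ξ) (wkC hN Ξ))
    (fun hV hN Ξ => .fBeta' (wkV hV Ξ) (wkC hN Ξ))
    (fun hM Ξ => .fEta (wkC hM Ξ))
    (fun hM Ξ => .fEta' (wkC hM Ξ))
    (fun hs hM hV Ξ => .arrBeta hs (wkC hM Ξ) (wkV hV Ξ))
    (fun hs hM hV Ξ => .arrBeta' hs (wkC hM Ξ) (wkV hV Ξ))
    (fun hs hM Ξ => .arrEta hs (wkC hM Ξ))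
    (fun hs hM Ξ => .arrEta' hs (wkC hM Ξ))
    (fun hs h1 h2 Ξ => .wthBeta1 hs (wkC h1 Ξ) (wkC h2 Ξ))
    (fun hs h1 h2 Ξ => .wthBeta1' hs (wkC h1 Ξ) (wkC h2 Ξ))
    (fun hs h1 h2 Ξ => .wthBeta2 hs (wkC h1 Ξ) (wkC h2 Ξ))
    (fun hs h1 h2 Ξ => .wthBeta2' hs (wkC h1 Ξ) (wkC h2 Ξ))
    (fun hs hM Ξ => .wthEta hs (wkC hM Ξ))
    (fun hs hM Ξ => .wthEta' hs (wkC hM Ξ))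
    (fun hs hM Ξ => .topEta hs (wkC hM Ξ))
    (fun hs hM Ξ => .topEta' hs (wkC hM Ξ))
    (fun hr hM Ξ => .nuBeta hr (wkC hM Ξ))
    (fun hr hM Ξ => .nuBeta' hr (wkC hM Ξ))
    (fun hr hM Ξ => .nuEta hr (wkC hM Ξ))
    (fun hr hM Ξ => .nuEta' hr (wkC hM Ξ))
    h Ξ

theorem subClosedC {P Δ M B} (h : CTyping P [] Δ M B) (σ : Nat → Val) : subC σ M = M := by
  rw [subAgrC h (τ := fun n => .var n) (fun n hn => absurd hn (by simp))]
  exact sub_id_C (fun n => rfl) M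

theorem renClosedC {P Δ M B} (h : CTyping P [] Δ M B) (f : Nat → Nat) : renC f M = M := by
  rw [renAgrC h (g := fun n => n) (fun n hn => absurd hn (by simp))]
  exact ren_id_C _ (fun n => rfl) M

theorem plugAssoc (S₁ S₂ M : Comp) : plug (plug S₁ S₂) M = plug S₁ (plug S₂ M) := by
  simp only [plug]
  exact plugPlugC M S₂ S₁ 0

theorem subPlugClosed {P Γv Av Δ B} {Vv : Val} (tV : VTyping P Γv Vv Av)
    {S : Comp} (tS : CTyping P [] Δ S B) (M : Comp) :
    sub0C Vv (plug S M) = plug S (sub0C Vv M) := by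
  simp only [plug, sub0C]
  rw [subPlug0C M S (sub0 Vv) (sub0Plug tV), subClosedC tS]

theorem ren0C (M : Comp) : renC (· + 0) M = M := ren_id_C _ (fun n => rfl) M

theorem varTy {P : Policy} {A : VTy} {Γ : Ctx} : VTyping P (A :: Γ) (.var 0) A := .var rfl

theorem sub2eq {P A C} {V W : Val} (tW : VTyping P [A] W C) (V' : Val) :
    subV (sub0 V') (subV (sub0 V) W) = subV (sub0 (subV (sub0 V') V)) W := by
  rw [sub_sub_V (σ := sub0 V') (τ := sub0 V) (ρ := fun n => subV (sub0 V') (sub0 V n)) (fun n => rfl) W]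
  exact subAgrV tW (fun n hn => by match n, hn with | 0, _ => rfl)

/-- Lemma: EP Pairs Compose.  In CBPV*:
(1) if `(V₁, S₁)` is a value ep pair from `A₁` to `A₂` and `(V₂, S₂)` is a
value ep pair from `A₂` to `A₃`, then `(V₂[V₁], S₁[S₂])` is a value ep pair
from `A₁` to `A₃`; and
(2) likewise for computation ep pairs. -/
theorem ep_pairs_compose :
    (∀ (A₁ A₂ A₃ : VTy) (V₁ V₂ : Val) (S₁ S₂ : Comp),
      ValEP A₁ A₂ V₁ S₁ → ValEP A₂ A₃ V₂ S₂ →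
      ValEP A₁ A₃ (sub0V V₁ V₂) (plug S₁ S₂)) ∧
    (∀ (B₁ B₂ B₃ : CTy) (V₁ V₂ : Val) (S₁ S₂ : Comp),
      CompEP B₁ B₂ V₁ S₁ → CompEP B₂ B₃ V₂ S₂ →
      CompEP B₁ B₃ (sub0V V₁ V₂) (plug S₁ S₂)) := by
  constructor
  · rintro A₁ A₂ A₃ V₁ V₂ S₁ S₂ ⟨tV₁, tS₁, ⟨r1a, r1b⟩, p1⟩ ⟨tV₂, tS₂, ⟨r2a, r2b⟩, p2⟩
    have hcx : cbpvStarP.cx := trivial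
    -- typing of the composite embedding
    have hσ : ∀ n B, ([A₂] : Ctx)[n]? = some B → VTyping cbpvStarP [A₁] (sub0 V₁ n) B := by
      intro n B h
      match n, h with
      | 0, h => cases h; exact tV₁
    have tVe : VTyping cbpvStarP [A₁] (sub0V V₁ V₂) A₃ := subTyV tV₂ hσ
    -- typing of the composite projection
    have tSe : CTyping cbpvStarP [] (some (.F A₃)) (plug S₁ S₂) (.F A₁) := plugTy tS₁ hcx tS₂
    refine ⟨tVe, tSe, ?_, ?_⟩
    · -- retraction
      have eRet : sub0C V₁ (.ret (.var 0)) = Comp.ret V₁ := rfl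
      have eRet2 : sub0C V₁ (.ret V₂) = Comp.ret (sub0V V₁ V₂) := rfl
      have EQ1 : plug (plug S₁ S₂) (.ret (sub0V V₁ V₂))
          = plug S₁ (sub0C V₁ (plug S₂ (.ret V₂))) := by
        rw [plugAssoc, subPlugClosed tV₁ tS₂, eRet2]
      rw [EQ1]
      have tS₁w : CTyping cbpvStarP [A₁] (some (.F A₂)) S₁ (.F A₁) := wkC tS₁ [A₁]
      have innerA : CLe cbpvStarP [A₁] [A₁] none none (.ret V₁)
          (sub0C V₁ (plug S₂ (.ret V₂))) (.F A₂) (.F A₂) := by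
        have := CLe.substVC (VLe.refl tV₁) (wkCLeS r2a [A₁])
        rwa [eRet] at this
      have innerB : CLe cbpvStarP [A₁] [A₁] none none
          (sub0C V₁ (plug S₂ (.ret V₂))) (.ret V₁) (.F A₂) (.F A₂) := by
        have := CLe.substVC (VLe.refl tV₁) (wkCLeS r2b [A₁])
        rwa [eRet] at this
      exact ⟨.trans r1a (.plugCong innerA (.refl tS₁w)),
             .trans (.plugCong innerB (.refl tS₁w)) r1b⟩
    · -- projection
      have tV₂w : CTyping cbpvStarP ([A₂] ++ [A₁]) none (.ret V₂) (.F A₃) := .ret (wkV tV₂ [A₁])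
      have eSub : sub0C V₁ (.ret V₂) = Comp.ret (sub0V V₁ V₂) := rfl
      set Ve := sub0V V₁ V₂ with hVe
      set T := Comp.bind S₁ (.ret Ve) with hT
      set Ufin := Comp.bind Comp.hole (.ret V₂) with hUfin
      have e0 : Comp.bind (plug S₁ S₂) (.ret Ve) = plug T S₂ := by
        simp only [plug, plugC, hT]
        rw [noHoleV tVe]
      -- step 1 : T ⊑ bind S₁ (bind (ret V₁) (ret V₂))
      have inner1 : CLe cbpvStarP [A₁] [A₁] none none (.ret Ve)
          (.bind (.ret V₁) (.ret V₂)) (.F A₃) (.F A₃) := by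
        have := CLe.fBeta' tV₁ tV₂w
        rwa [eSub] at this
      have c1 : CLe cbpvStarP [] [] (some (.F A₂)) (some (.F A₂)) T
          (.bind S₁ (.bind (.ret V₁) (.ret V₂))) (.F A₃) (.F A₃) :=
        .bindCong (.refl tS₁) inner1
      -- step 2 : reassociate the two binds
      set U := Comp.bind Comp.hole (.bind (.ret V₁) (.ret V₂)) with hU
      set U' := Comp.bind (Comp.bind Comp.hole (.ret V₁)) (.ret V₂) with hU'
      have tU' : CTyping cbpvStarP [] (some (.F A₁)) U' (.F A₃) :=
        .bind (.bind .hole (.ret tV₁)) (.ret tV₂)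
      have eU : plug U S₁ = Comp.bind S₁ (.bind (.ret V₁) (.ret V₂)) := by
        simp only [plug, plugC, hU]
        rw [ren0C, noHoleV tV₁, noHoleV tV₂]
      have eU' : plug U' S₁ = Comp.bind (.bind S₁ (.ret V₁)) (.ret V₂) := by
        simp only [plug, plugC, hU']
        rw [ren0C, noHoleV tV₁, noHoleV tV₂]
      have h2 : CLe cbpvStarP [A₁] [A₁] none none (.ret V₁)
          (.bind (.ret (.var 0)) (.ret V₁)) (.F A₂) (.F A₂) := by
        have := CLe.fBeta' (varTy (A := A₁) (Γ := [])) (.ret (wkV tV₁ [A₁]))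
        have e : sub0C (Val.var 0) (.ret V₁) = Comp.ret V₁ := by
          show Comp.ret (subV (sub0 (.var 0)) V₁) = Comp.ret V₁
          rw [subAgrV tV₁ (τ := fun n => .var n) (fun n hn => by match n, hn with | 0, _ => rfl),
            sub_id_V (fun n => rfl)]
        rwa [e] at this
      have innerU : CLe cbpvStarP [A₁] [A₁] none none (.ret Ve)
          (.bind (.bind (.ret (.var 0)) (.ret V₁)) (.ret V₂)) (.F A₃) (.F A₃) :=
        .trans inner1 (.bindCong h2 (.refl tV₂w))
      have u1 : CLe cbpvStarP [] [] (some (.F A₁)) (some (.F A₁)) U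
          (.bind .hole (.ret Ve)) (.F A₃) (.F A₃) := by
        refine .bindCong (.hole List.Forall₂.nil (.refl _)) ?_
        have := CLe.fBeta tV₁ tV₂w
        rwa [eSub] at this
      have hfEta := CLe.fEta' tU'
      have eRen : renC Nat.succ U' = U' := renClosedC tU' Nat.succ
      have ePlug : plug U' (.ret (.var 0))
          = Comp.bind (.bind (.ret (.var 0)) (.ret V₁)) (.ret V₂) := by
        simp only [plug, plugC, hU']
        rw [ren0C, noHoleV tV₁, noHoleV tV₂]
      rw [eRen, ePlug] at hfEta
      have u2 : CLe cbpvStarP [] [] (some (.F A₁)) (some (.F A₁))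
          (.bind .hole (.ret Ve)) U' (.F A₃) (.F A₃) :=
        .trans (.bindCong (.hole List.Forall₂.nil (.refl _)) innerU) hfEta
      have c2 : CLe cbpvStarP [] [] (some (.F A₂)) (some (.F A₂))
          (.bind S₁ (.bind (.ret V₁) (.ret V₂)))
          (.bind (.bind S₁ (.ret V₁)) (.ret V₂)) (.F A₃) (.F A₃) := by
        have := CLe.plugCong (.refl tS₁) (.trans u1 u2)
        rwa [eU, eU'] at this
      -- step 3 : use the first projection
      have tUfin : CTyping cbpvStarP [] (some (.F A₂)) Ufin (.F A₃) := .bind .hole (.ret tV₂)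
      have e3 : plug Ufin (.bind S₁ (.ret V₁)) = Comp.bind (.bind S₁ (.ret V₁)) (.ret V₂) := by
        simp only [plug, plugC, hUfin]
        rw [ren0C, noHoleV tV₂]
      have e4 : plug Ufin Comp.hole = Ufin := by
        simp only [plug, plugC, hUfin]
        rw [ren0C, noHoleV tV₂]
      have c3 : CLe cbpvStarP [] [] (some (.F A₂)) (some (.F A₂))
          (.bind (.bind S₁ (.ret V₁)) (.ret V₂)) Ufin (.F A₃) (.F A₃) := by
        have := CLe.plugCong p1 (.refl tUfin)
        rwa [e3, e4] at this
      -- assemble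
      have hTU : CLe cbpvStarP [] [] (some (.F A₂)) (some (.F A₂)) T Ufin (.F A₃) (.F A₃) :=
        .trans c1 (.trans c2 c3)
      have main := CLe.plugCong (.refl tS₂) hTU
      have e5 : plug Ufin S₂ = Comp.bind S₂ (.ret V₂) := by
        simp only [plug, plugC, hUfin]
        rw [ren0C, noHoleV tV₂]
      rw [e5] at main
      rw [e0]
      exact .trans main p2
  · rintro B₁ B₂ B₃ V₁ V₂ S₁ S₂ ⟨tV₁, tS₁, ⟨r1a, r1b⟩, p1⟩ ⟨tV₂, tS₂, ⟨r2a, r2b⟩, p2⟩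
    have hcx : cbpvStarP.cx := trivial
    have hσ : ∀ n B, ([VTy.U B₂] : Ctx)[n]? = some B →
        VTyping cbpvStarP [.U B₁] (sub0 V₁ n) B := by
      intro n B h
      match n, h with
      | 0, h => cases h; exact tV₁
    have tVe : VTyping cbpvStarP [.U B₁] (sub0V V₁ V₂) (.U B₃) := subTyV tV₂ hσ
    have tSe : CTyping cbpvStarP [] (some B₃) (plug S₁ S₂) B₁ := plugTy tS₁ hcx tS₂
    refine ⟨tVe, tSe, ?_, ?_⟩
    · -- retraction
      have eF : sub0C V₁ (.force (.var 0)) = Comp.force V₁ := rfl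
      have eF2 : sub0C V₁ (.force V₂) = Comp.force (sub0V V₁ V₂) := rfl
      have EQ1 : plug (plug S₁ S₂) (.force (sub0V V₁ V₂))
          = plug S₁ (sub0C V₁ (plug S₂ (.force V₂))) := by
        rw [plugAssoc, subPlugClosed tV₁ tS₂, eF2]
      rw [EQ1]
      have tS₁w : CTyping cbpvStarP [.U B₁] (some B₂) S₁ B₁ := wkC tS₁ [.U B₁]
      have innerA : CLe cbpvStarP [.U B₁] [.U B₁] none none (.force V₁)
          (sub0C V₁ (plug S₂ (.force V₂))) B₂ B₂ := by
        have := CLe.substVC (VLe.refl tV₁) (wkCLeS r2a [.U B₁])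
        rwa [eF] at this
      have innerB : CLe cbpvStarP [.U B₁] [.U B₁] none none
          (sub0C V₁ (plug S₂ (.force V₂))) (.force V₁) B₂ B₂ := by
        have := CLe.substVC (VLe.refl tV₁) (wkCLeS r2b [.U B₁])
        rwa [eF] at this
      exact ⟨.trans r1a (.plugCong innerA (.refl tS₁w)),
             .trans (.plugCong innerB (.refl tS₁w)) r1b⟩
    · -- projection
      set Wmid := Val.thunk (plug S₂ (.force (.var 0))) with hWmid
      set Wth1 := Val.thunk (plug S₁ (.force (.var 0))) with hWth1
      set Wa := Val.thunk (plug S₁ (plug S₂ (.force (.var 0)))) with hWa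
      set Wb := Val.thunk (plug S₁ (.force Wmid)) with hWb
      have tfv : CTyping cbpvStarP [VTy.U B₃] none (.force (.var 0)) B₃ := .force varTy
      have tMmid : CTyping cbpvStarP [VTy.U B₃] none (plug S₂ (.force (.var 0))) B₂ :=
        plugTy tS₂ hcx tfv
      have tWmid : VTyping cbpvStarP [VTy.U B₃] Wmid (.U B₂) := .thunk tMmid
      have tV₁w : VTyping cbpvStarP (VTy.U B₁ :: [VTy.U B₃]) V₁ (.U B₂) := wkV tV₁ [.U B₃]
      have tV₂w : VTyping cbpvStarP (VTy.U B₂ :: [VTy.U B₃]) V₂ (.U B₃) := wkV tV₂ [.U B₃]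
      -- the big thunk equals Wa (associativity)
      have eWa : Val.thunk (plug (plug S₁ S₂) (.force (.var 0))) = Wa := by
        rw [hWa, plugAssoc]
      -- step A : split the composite substitution
      have eqA : sub0V (Val.thunk (plug (plug S₁ S₂) (.force (.var 0)))) (sub0V V₁ V₂)
          = sub0V (sub0V Wa V₁) V₂ := by
        rw [eWa]
        exact sub2eq tV₂ Wa
      -- step B : Wa ⊑ Wb
      have hWaWb : VLe cbpvStarP [VTy.U B₃] [VTy.U B₃] Wa Wb (.U B₁) (.U B₁) :=
        .thunkCong (.plugCong (CLe.uBeta' tMmid) (.refl (wkC tS₁ [.U B₃])))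
      have l1 : VLe cbpvStarP [VTy.U B₃] [VTy.U B₃]
          (sub0V (sub0V Wa V₁) V₂) (sub0V (sub0V Wb V₁) V₂) (.U B₃) (.U B₃) :=
        .substVV (.substVV hWaWb (.refl tV₁w)) (.refl tV₂w)
      -- step C : relate Wb to the first projection
      have eqC : sub0V Wmid (sub0V Wth1 V₁) = sub0V Wb V₁ := by
        have e1 : subV (sub0 Wmid) Wth1 = Wb := by
          rw [hWth1, hWb]
          show Val.thunk (subC (sub0 Wmid) (plugC (.force (.var 0)) 0 S₁))
            = Val.thunk (plugC (.force Wmid) 0 S₁)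
          rw [subPlug0C _ _ _ (sub0Plug tWmid), subClosedC tS₁]
          rfl
        calc subV (sub0 Wmid) (subV (sub0 Wth1) V₁)
            = subV (sub0 (subV (sub0 Wmid) Wth1)) V₁ := sub2eq tV₁ Wmid
          _ = sub0V Wb V₁ := by rw [e1]; rfl
      have l2 : VLe cbpvStarP [VTy.U B₃] [VTy.U B₃]
          (sub0V Wb V₁) Wmid (.U B₂) (.U B₂) := by
        have := VLe.substVV (VLe.refl tWmid) (wkVLeS p1 [.U B₃])
        have e2 : sub0V Wmid (Val.var 0) = Wmid := rfl
        rw [e2] at this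
        rw [← eqC]
        exact this
      have l3 : VLe cbpvStarP [VTy.U B₃] [VTy.U B₃]
          (sub0V (sub0V Wb V₁) V₂) (sub0V Wmid V₂) (.U B₃) (.U B₃) :=
        .substVV l2 (.refl tV₂w)
      rw [eqA]
      exact .trans l1 (.trans l3 p2)

end GTTPaper
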